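/- arXiv:2407.01121 — 4 statements merged into one kernel-verified Lean document; each statement's English description precedes it below -/
import Mathlib

section
/- Let G be an odd-order connected equimatchable graph that has a near-perfect matching. If α(G) > 2, then G contains an independent set S of size three such that G − v has a perfect matching for every v ∈ S. -/
open SimpleGraph

variable {V : Type*} {W : Type*}

/-- The strong product of two simple graphs. -/
def strongProd (G : SimpleGraph V) (H : SimpleGraph W) : SimpleGraph (V × W) where
  Adj x y := x ≠ y ∧ (x.1 = y.1 ∨ G.Adj x.1 y.1) ∧ (x.2 = y.2 ∨ H.Adj x.2 y.2)
  symm := ⟨fun x y ⟨hne, h1, h2⟩ =>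
    ⟨hne.symm, h1.imp Eq.symm (fun h => h.symm), h2.imp Eq.symm (fun h => h.symm)⟩⟩
  loopless := ⟨fun x h => h.1 rfl⟩

/-- A dominating set: every vertex outside has a neighbor inside. -/
def IsDomSet (G : SimpleGraph V) (D : Set V) : Prop :=
  ∀ v, v ∉ D → ∃ u ∈ D, G.Adj u v

/-- A minimal dominating set. -/
def IsMinlDomSet (G : SimpleGraph V) (D : Set V) : Prop :=
  IsDomSet G D ∧ ∀ D', D' ⊂ D → ¬ IsDomSet G D'

/-- A graph is well-dominated if every minimal dominating set has minimum cardinality. -/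
def WellDominated (G : SimpleGraph V) : Prop :=
  ∀ D D' : Set V, IsMinlDomSet G D → IsDomSet G D' → D.ncard ≤ D'.ncard

/-- The domination number. -/
noncomputable def domNum (G : SimpleGraph V) : ℕ :=
  sInf {n | ∃ D : Set V, IsDomSet G D ∧ D.ncard = n}

/-- The closed neighborhood of a vertex. -/
def closedNbhd (G : SimpleGraph V) (v : V) : Set V := insert v (G.neighborSet v)

/-- `G` is trivially well-dominated via the vertices `u 0, …, u (t-1)`:
their closed neighborhoods are cliques and partition `V`. -/
def TriviallyWellDominatedWith (G : SimpleGraph V) {t : ℕ} (u : Fin t → V) : Prop :=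
  (∀ i, G.IsClique (closedNbhd G (u i))) ∧ (∀ v : V, ∃! i, v ∈ closedNbhd G (u i))

def TriviallyWellDominated (G : SimpleGraph V) : Prop :=
  ∃ (t : ℕ) (u : Fin t → V), TriviallyWellDominatedWith G u

/-- An edge dominating set: every edge of `G` not in `F` shares an endpoint
with some edge of `F`. -/
def IsEDS (G : SimpleGraph V) (F : Set (Sym2 V)) : Prop :=
  F ⊆ G.edgeSet ∧ ∀ e ∈ G.edgeSet, e ∉ F → ∃ f ∈ F, ∃ v, v ∈ e ∧ v ∈ f

/-- A minimal edge dominating set. -/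
def IsMinlEDS (G : SimpleGraph V) (F : Set (Sym2 V)) : Prop :=
  IsEDS G F ∧ ∀ F', F' ⊂ F → ¬ IsEDS G F'

/-- Well-edge-dominated: every minimal edge dominating set has minimum cardinality. -/
def WellEdgeDominated (G : SimpleGraph V) : Prop :=
  ∀ F F' : Set (Sym2 V), IsMinlEDS G F → IsEDS G F' → F.ncard ≤ F'.ncard

/-- A matching, as a set of pairwise nonadjacent edges. -/
def IsMatchingSet (G : SimpleGraph V) (M : Set (Sym2 V)) : Prop :=
  M ⊆ G.edgeSet ∧ ∀ e ∈ M, ∀ f ∈ M, e ≠ f → ∀ v : V, ¬ (v ∈ e ∧ v ∈ f)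

/-- A maximal matching. -/
def IsMaxlMatching (G : SimpleGraph V) (M : Set (Sym2 V)) : Prop :=
  IsMatchingSet G M ∧ ∀ M', M ⊆ M' → IsMatchingSet G M' → M' = M

/-- A maximum matching. -/
def IsMaxMatching (G : SimpleGraph V) (M : Set (Sym2 V)) : Prop :=
  IsMatchingSet G M ∧ ∀ M', IsMatchingSet G M' → M'.ncard ≤ M.ncard

/-- Equimatchable: every maximal matching is maximum. -/
def Equimatchable (G : SimpleGraph V) : Prop :=
  ∀ M M' : Set (Sym2 V), IsMaxlMatching G M → IsMatchingSet G M' → M'.ncard ≤ M.ncard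

/-- The set of endpoints of the edges of `M`. -/
def mVerts (M : Set (Sym2 V)) : Set V := {v | ∃ e ∈ M, v ∈ e}

/-- A perfect matching covers every vertex. -/
def IsPerfectMatchingSet (G : SimpleGraph V) (M : Set (Sym2 V)) : Prop :=
  IsMatchingSet G M ∧ ∀ v : V, v ∈ mVerts M

/-- A near-perfect matching covers all vertices but exactly one. -/
def IsNearPerfectMatchingSet (G : SimpleGraph V) (M : Set (Sym2 V)) : Prop :=
  IsMatchingSet G M ∧ ∃ w : V, mVerts M = {w}ᶜ

/-- The matching number. -/
noncomputable def matchNum (G : SimpleGraph V) : ℕ :=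
  sSup {n | ∃ M : Set (Sym2 V), IsMatchingSet G M ∧ M.ncard = n}

/-- The independence number. -/
noncomputable def indepNum (G : SimpleGraph V) : ℕ :=
  sSup {n | ∃ S : Set V, (S.Pairwise fun u v => ¬ G.Adj u v) ∧ S.ncard = n}

/-- `G` with a set of vertices deleted (induced subgraph on the complement). -/
abbrev delVerts (G : SimpleGraph V) (S : Set V) : SimpleGraph ↥(Sᶜ) := G.induce Sᶜ

/-- Factor-critical: deleting any vertex leaves a graph with a perfect matching. -/
def FactorCritical (G : SimpleGraph V) : Prop :=
  ∀ v : V, ∃ M, IsPerfectMatchingSet (delVerts G {v}) M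

/-- 2-connected: at least three vertices, connected, and no cutvertex. -/
def TwoConnected (G : SimpleGraph V) [Fintype V] : Prop :=
  3 ≤ Fintype.card V ∧ G.Connected ∧ ∀ v : V, (delVerts G {v}).Connected

namespace Stmt16

open Classical Set
set_option linter.unusedVariables false

variable {V : Type*}

/-- Near-perfect matching missing exactly `x`. -/
def NP (G : SimpleGraph V) (M : Set (Sym2 V)) (x : V) : Prop :=
  IsMatchingSet G M ∧ mVerts M = ({x} : Set V)ᶜ

/-- The set of exposable vertices. -/
def Dset (G : SimpleGraph V) : Set V := {v | ∃ M, NP G M v}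

lemma adj_of_mem {G : SimpleGraph V} {M : Set (Sym2 V)} (hM : IsMatchingSet G M)
    {a b : V} (h : s(a,b) ∈ M) : G.Adj a b := by
  have := hM.1 h
  rwa [SimpleGraph.mem_edgeSet] at this

lemma ne_of_mem {G : SimpleGraph V} {M : Set (Sym2 V)} (hM : IsMatchingSet G M)
    {a b : V} (h : s(a,b) ∈ M) : a ≠ b := (adj_of_mem hM h).ne

lemma partner_unique {G : SimpleGraph V} {M : Set (Sym2 V)} (hM : IsMatchingSet G M)
    {a b c : V} (h1 : s(a,b) ∈ M) (h2 : s(a,c) ∈ M) : b = c := by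
  by_cases he : s(a,b) = s(a,c)
  · exact Sym2.congr_right.mp he
  · exact absurd ⟨Sym2.mem_mk_left a b, Sym2.mem_mk_left a c⟩ (hM.2 _ h1 _ h2 he a)

lemma mem_mVerts {M : Set (Sym2 V)} {v : V} : v ∈ mVerts M ↔ ∃ e ∈ M, v ∈ e := Iff.rfl

lemma mem_mVerts_of {M : Set (Sym2 V)} {a b : V} (h : s(a,b) ∈ M) :
    a ∈ mVerts M ∧ b ∈ mVerts M :=
  ⟨⟨_, h, Sym2.mem_mk_left a b⟩, ⟨_, h, Sym2.mem_mk_right a b⟩⟩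

lemma matching_subset {G : SimpleGraph V} {M M' : Set (Sym2 V)}
    (hsub : M' ⊆ M) (hM : IsMatchingSet G M) : IsMatchingSet G M' :=
  ⟨hsub.trans hM.1, fun e he f hf hne => hM.2 e (hsub he) f (hsub hf) hne⟩

lemma mVerts_diff_single {G : SimpleGraph V} {M : Set (Sym2 V)} (hM : IsMatchingSet G M)
    {a b : V} (h : s(a,b) ∈ M) :
    mVerts (M \ {s(a,b)}) = mVerts M \ {a, b} := by
  ext v
  constructor
  · rintro ⟨e, ⟨heM, hene⟩, hve⟩
    refine ⟨⟨e, heM, hve⟩, ?_⟩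
    intro hv
    have hv' : v ∈ (s(a,b) : Sym2 V) := by
      rw [Sym2.mem_iff]; simpa using hv
    exact hM.2 e heM _ h (by simpa using hene) v ⟨hve, hv'⟩
  · rintro ⟨⟨e, heM, hve⟩, hvab⟩
    refine ⟨e, ⟨heM, ?_⟩, hve⟩
    simp only [mem_singleton_iff]
    rintro rfl
    rw [Sym2.mem_iff] at hve
    rcases hve with rfl | rfl
    · exact hvab (Or.inl rfl)
    · exact hvab (Or.inr rfl)

lemma matching_insert {G : SimpleGraph V} {M : Set (Sym2 V)} (hM : IsMatchingSet G M)
    {a b : V} (hab : G.Adj a b) (ha : a ∉ mVerts M) (hb : b ∉ mVerts M) :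
    IsMatchingSet G (insert s(a,b) M) ∧
      mVerts (insert s(a,b) M) = {a, b} ∪ mVerts M := by
  constructor
  · constructor
    · rintro e (rfl | he)
      · exact hab
      · exact hM.1 he
    · have key : ∀ f ∈ M, ∀ v, ¬ (v ∈ (s(a,b) : Sym2 V) ∧ v ∈ f) := by
        rintro f hf v ⟨hv1, hv2⟩
        rw [Sym2.mem_iff] at hv1
        rcases hv1 with rfl | rfl
        · exact ha ⟨f, hf, hv2⟩
        · exact hb ⟨f, hf, hv2⟩
      rintro e (rfl | he) f (rfl | hf) hne v
      · exact fun h => hne rfl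
      · exact key f hf v
      · exact fun h => key e he v ⟨h.2, h.1⟩
      · exact hM.2 e he f hf hne v
  · ext v
    constructor
    · rintro ⟨e, (rfl | he), hve⟩
      · rw [Sym2.mem_iff] at hve
        rcases hve with rfl | rfl
        · exact Or.inl (Or.inl rfl)
        · exact Or.inl (Or.inr rfl)
      · exact Or.inr ⟨e, he, hve⟩
    · rintro (hv | ⟨e, he, hve⟩)
      · refine ⟨_, Or.inl rfl, ?_⟩
        rw [Sym2.mem_iff]; simpa using hv
      · exact ⟨e, Or.inr he, hve⟩

end Stmt16
namespace Stmt16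

variable {V : Type*}

lemma ncard_mVerts {G : SimpleGraph V} [Fintype V] {M : Set (Sym2 V)}
    (hM : IsMatchingSet G M) : (mVerts M).ncard = 2 * M.ncard := by
  classical
  refine Set.Finite.induction_on
    (motive := fun N _ => IsMatchingSet G N → (mVerts N).ncard = 2 * N.ncard) M
    (Set.toFinite M) ?_ ?_ hM
  · intro _; simp [mVerts]
  · rintro e M' heM' hfin IH hM'
    obtain ⟨⟨a, b⟩, rfl⟩ := e.exists_rep
    have hm : IsMatchingSet G M' := matching_subset (Set.subset_insert _ _) hM'
    have hadj : G.Adj a b := adj_of_mem hM' (Set.mem_insert _ _)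
    have ha : a ∉ mVerts M' := by
      rintro ⟨f, hf, haf⟩
      exact hM'.2 _ (Set.mem_insert _ _) f (Or.inr hf)
        (by rintro rfl; exact heM' hf) a ⟨Sym2.mem_mk_left a b, haf⟩
    have hb : b ∉ mVerts M' := by
      rintro ⟨f, hf, hbf⟩
      exact hM'.2 _ (Set.mem_insert _ _) f (Or.inr hf)
        (by rintro rfl; exact heM' hf) b ⟨Sym2.mem_mk_right a b, hbf⟩
    have hmv : mVerts (insert s(a,b) M') = {a,b} ∪ mVerts M' :=
      (matching_insert hm hadj ha hb).2
    rw [hmv, Set.ncard_insert_of_notMem heM' hfin]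
    have hpair : ({a,b} : Set V) ∪ mVerts M' = insert a (insert b (mVerts M')) := by
      simp [Set.insert_union]
    have hb' : b ∉ mVerts M' := hb
    have ha' : a ∉ insert b (mVerts M') := by
      simp only [Set.mem_insert_iff]
      push_neg
      exact ⟨hadj.ne, ha⟩
    rw [hpair, Set.ncard_insert_of_notMem ha' ((Set.toFinite _)),
      Set.ncard_insert_of_notMem hb' (Set.toFinite _), IH hm]
    ring

lemma ncard_compl_singleton [Fintype V] (x : V) :
    (({x} : Set V)ᶜ).ncard = Fintype.card V - 1 := by
  have h := Set.ncard_add_ncard_compl ({x} : Set V)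
  rw [Nat.card_eq_fintype_card, Set.ncard_singleton] at h
  omega

lemma exists_maximal_matching_superset {G : SimpleGraph V} [Fintype V]
    {M : Set (Sym2 V)} (hM : IsMatchingSet G M) :
    ∃ N, IsMaxlMatching G N ∧ M ⊆ N := by
  classical
  have hC : ({N | IsMatchingSet G N ∧ M ⊆ N} : Set (Set (Sym2 V))).Finite := Set.toFinite _
  have hne : ({N | IsMatchingSet G N ∧ M ⊆ N} : Set (Set (Sym2 V))).Nonempty :=
    ⟨M, hM, subset_rfl⟩
  obtain ⟨N, hN, hmax⟩ := Set.Finite.exists_maximalFor (fun N => N.ncard) _ hC hne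
  refine ⟨N, ⟨hN.1, ?_⟩, hN.2⟩
  intro N' hsub hN'
  have hN'C : N' ∈ {N | IsMatchingSet G N ∧ M ⊆ N} := ⟨hN', hN.2.trans hsub⟩
  have hle : N.ncard ≤ N'.ncard := Set.ncard_le_ncard hsub (Set.toFinite _)
  have heq := hmax hN'C hle
  exact (Set.eq_of_subset_of_ncard_le hsub heq (Set.toFinite _)).symm

lemma maximal_np {G : SimpleGraph V} [Fintype V] (hodd : Odd (Fintype.card V))
    (heq : Equimatchable G) {M0 : Set (Sym2 V)} {w0 : V} (hM0 : NP G M0 w0)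
    {M : Set (Sym2 V)} (hM : IsMaxlMatching G M) : ∃ z, NP G M z := by
  have h1 : (mVerts M0).ncard = 2 * M0.ncard := ncard_mVerts hM0.1
  rw [hM0.2, ncard_compl_singleton] at h1
  have h2 : M0.ncard ≤ M.ncard := heq M M0 hM hM0.1
  have h3 : (mVerts M).ncard = 2 * M.ncard := ncard_mVerts hM.1
  have h4 : (mVerts M).ncard ≤ Fintype.card V := by
    have := Set.ncard_le_ncard (Set.subset_univ (mVerts M)) (Set.toFinite _)
    rwa [Set.ncard_univ, Nat.card_eq_fintype_card] at this
  obtain ⟨k, hk⟩ := hodd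
  have h7 : ((mVerts M)ᶜ).ncard = 1 := by
    have h := Set.ncard_add_ncard_compl (mVerts M)
    rw [Nat.card_eq_fintype_card] at h
    omega
  obtain ⟨z, hz⟩ := Set.ncard_eq_one.mp h7
  refine ⟨z, hM.1, ?_⟩
  rw [← compl_compl (mVerts M), hz]

lemma maxcrit {G : SimpleGraph V} {M : Set (Sym2 V)} (hM : IsMatchingSet G M)
    (h : ∀ a b, a ∉ mVerts M → b ∉ mVerts M → ¬ G.Adj a b) : IsMaxlMatching G M := by
  refine ⟨hM, ?_⟩
  intro M' hsub hM'
  by_contra hne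
  obtain ⟨e, heM', heM⟩ : ∃ e ∈ M', e ∉ M := by
    by_contra h'
    push_neg at h'
    exact hne (Set.Subset.antisymm h' hsub)
  obtain ⟨⟨a, b⟩, rfl⟩ := e.exists_rep
  have ha : a ∉ mVerts M := by
    rintro ⟨f, hf, haf⟩
    exact hM'.2 _ heM' f (hsub hf) (by rintro rfl; exact heM hf) a
      ⟨Sym2.mem_mk_left a b, haf⟩
  have hb : b ∉ mVerts M := by
    rintro ⟨f, hf, hbf⟩
    exact hM'.2 _ heM' f (hsub hf) (by rintro rfl; exact heM hf) b
      ⟨Sym2.mem_mk_right a b, hbf⟩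
  exact h a b ha hb (adj_of_mem hM' heM')

lemma kill3 {G : SimpleGraph V} [Fintype V] (hodd : Odd (Fintype.card V))
    (heq : Equimatchable G) {M0 : Set (Sym2 V)} {w0 : V} (hM0 : NP G M0 w0)
    {M : Set (Sym2 V)} (hM : IsMatchingSet G M) {u v w : V}
    (hmv : mVerts M = ({u, v, w} : Set V)ᶜ)
    (huv : u ≠ v) (hA1 : ¬ G.Adj u v) (hA2 : ¬ G.Adj u w) (hA3 : ¬ G.Adj v w) :
    False := by
  have hirr : ∀ x : V, ¬ G.Adj x x := fun x => G.loopless.irrefl x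
  have hA1' : ¬ G.Adj v u := fun h => hA1 h.symm
  have hA2' : ¬ G.Adj w u := fun h => hA2 h.symm
  have hA3' : ¬ G.Adj w v := fun h => hA3 h.symm
  have hmax : IsMaxlMatching G M := by
    refine maxcrit hM ?_
    intro a b ha hb hadj
    rw [hmv] at ha hb
    simp only [Set.mem_compl_iff, not_not, Set.mem_insert_iff, Set.mem_singleton_iff] at ha hb
    rcases ha with rfl | rfl | rfl <;> rcases hb with rfl | rfl | rfl <;>
      first
        | exact hirr _ hadj
        | exact hA1 hadj
        | exact hA2 hadj
        | exact hA3 hadj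
        | exact hA1' hadj
        | exact hA2' hadj
        | exact hA3' hadj
  obtain ⟨z, hz⟩ := maximal_np hodd heq hM0 hmax
  have h8 : ({u, v, w} : Set V) = {z} := by
    have h9 : (({u, v, w} : Set V))ᶜ = ({z} : Set V)ᶜ := by rw [← hmv, hz.2]
    exact compl_inj_iff.mp h9
  have hu : u ∈ ({z} : Set V) := h8 ▸ (by simp : u ∈ ({u,v,w} : Set V))
  have hv : v ∈ ({z} : Set V) := h8 ▸ (by simp : v ∈ ({u,v,w} : Set V))
  simp only [Set.mem_singleton_iff] at hu hv
  exact huv (hu.trans hv.symm)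

end Stmt16
namespace Stmt16

variable {V : Type*}

lemma exists_partner {G : SimpleGraph V} {M : Set (Sym2 V)} {x v : V}
    (hM : NP G M x) (hv : v ≠ x) : ∃ p, s(v,p) ∈ M := by
  have hvm : v ∈ mVerts M := by rw [hM.2]; simpa using hv
  obtain ⟨e, he, hve⟩ := hvm
  obtain ⟨p, rfl⟩ := Sym2.mem_iff_exists.mp hve
  exact ⟨p, he⟩

lemma mem_compl_singleton {x v : V} (h : v ≠ x) : v ∈ ({x} : Set V)ᶜ := by simpa using h

lemma np_partner_ne {G : SimpleGraph V} {M : Set (Sym2 V)} {x a b : V}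
    (hM : NP G M x) (h : s(a,b) ∈ M) : a ≠ x ∧ b ≠ x := by
  have := mem_mVerts_of h
  rw [hM.2] at this
  constructor
  · simpa using this.1
  · simpa using this.2

lemma np_diff2 {G : SimpleGraph V} {M : Set (Sym2 V)} {x a1 p1 a2 p2 : V}
    (hM : NP G M x) (h1 : s(a1,p1) ∈ M) (h2 : s(a2,p2) ∈ M)
    (hne : s(a1,p1) ≠ s(a2,p2)) :
    IsMatchingSet G (M \ {s(a1,p1), s(a2,p2)}) ∧
      mVerts (M \ {s(a1,p1), s(a2,p2)}) = ({x} : Set V)ᶜ \ {a1, p1, a2, p2} := by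
  have hsplit : M \ {s(a1,p1), s(a2,p2)} = (M \ {s(a1,p1)}) \ {s(a2,p2)} := by
    rw [Set.insert_eq, ← Set.diff_diff]
  have hm1 : IsMatchingSet G (M \ {s(a1,p1)}) := matching_subset Set.diff_subset hM.1
  have h2' : s(a2,p2) ∈ M \ {s(a1,p1)} := ⟨h2, by simpa using (Ne.symm hne)⟩
  constructor
  · rw [hsplit]; exact matching_subset Set.diff_subset hm1
  · rw [hsplit, mVerts_diff_single hm1 h2', mVerts_diff_single hM.1 h1, hM.2,
      Set.diff_diff]
    congr 1
    ext v; simp; tauto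

lemma np_swap {G : SimpleGraph V} {M : Set (Sym2 V)} {x y z : V}
    (hM : NP G M x) (hxy : G.Adj x y) (hyz : s(y,z) ∈ M) :
    NP G (insert s(x,y) (M \ {s(y,z)})) z ∧ z ≠ x ∧ z ≠ y ∧ y ≠ x ∧ z ∈ Dset G := by
  have hzx : z ≠ x := (np_partner_ne hM hyz).2
  have hyx : y ≠ x := (np_partner_ne hM hyz).1
  have hyz' : y ≠ z := ne_of_mem hM.1 hyz
  have hmd : IsMatchingSet G (M \ {s(y,z)}) := matching_subset Set.diff_subset hM.1
  have hmvd : mVerts (M \ {s(y,z)}) = ({x} : Set V)ᶜ \ {y, z} :=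
    (mVerts_diff_single hM.1 hyz).trans (by rw [hM.2])
  have hxm : x ∉ mVerts (M \ {s(y,z)}) := by rw [hmvd]; simp
  have hym : y ∉ mVerts (M \ {s(y,z)}) := by rw [hmvd]; simp
  obtain ⟨hmi, hmvi⟩ := matching_insert hmd hxy hxm hym
  have hnp : NP G (insert s(x,y) (M \ {s(y,z)})) z := by
    refine ⟨hmi, ?_⟩
    rw [hmvi, hmvd]
    ext v
    simp only [Set.mem_union, Set.mem_insert_iff, Set.mem_singleton_iff, Set.mem_diff,
      Set.mem_compl_iff]
    constructor
    · rintro ((rfl | rfl) | ⟨hvx, hv⟩)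
      · exact hzx.symm
      · exact hyz'
      · intro rfl; exact hv (Or.inr rfl)
    · intro hvz
      by_cases hvx : v = x
      · exact Or.inl (Or.inl hvx)
      · by_cases hvy : v = y
        · exact Or.inl (Or.inr hvy)
        · exact Or.inr ⟨hvx, fun h => h.elim hvy hvz⟩
  exact ⟨hnp, hzx, hyz'.symm, hyx, ⟨_, hnp⟩⟩

lemma np_rewire1 {G : SimpleGraph V} {M : Set (Sym2 V)} {x a1 p1 a2 p2 : V}
    (hM : NP G M x) (h1 : s(a1,p1) ∈ M) (h2 : s(a2,p2) ∈ M)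
    (hne : s(a1,p1) ≠ s(a2,p2)) (hadj : G.Adj p1 p2) :
    IsMatchingSet G (insert s(p1,p2) (M \ {s(a1,p1), s(a2,p2)})) ∧
      mVerts (insert s(p1,p2) (M \ {s(a1,p1), s(a2,p2)})) = ({x, a1, a2} : Set V)ᶜ := by
  obtain ⟨hmd, hmvd⟩ := np_diff2 hM h1 h2 hne
  have hdisj : ∀ v, ¬ (v ∈ (s(a1,p1) : Sym2 V) ∧ v ∈ (s(a2,p2) : Sym2 V)) :=
    hM.1.2 _ h1 _ h2 hne
  have ha1p2 : a1 ≠ p2 := fun h => hdisj a1 ⟨Sym2.mem_mk_left _ _, h ▸ Sym2.mem_mk_right _ _⟩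
  have ha1a2 : a1 ≠ a2 := fun h => hdisj a1 ⟨Sym2.mem_mk_left _ _, h ▸ Sym2.mem_mk_left _ _⟩
  have hp1p2 : p1 ≠ p2 := fun h => hdisj p1 ⟨Sym2.mem_mk_right _ _, h ▸ Sym2.mem_mk_right _ _⟩
  have hp1a2 : p1 ≠ a2 := fun h => hdisj p1 ⟨Sym2.mem_mk_right _ _, h ▸ Sym2.mem_mk_left _ _⟩
  have ha1p1 : a1 ≠ p1 := ne_of_mem hM.1 h1
  have ha2p2 : a2 ≠ p2 := ne_of_mem hM.1 h2
  have hx1 : a1 ≠ x := (np_partner_ne hM h1).1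
  have hx2 : p1 ≠ x := (np_partner_ne hM h1).2
  have hx3 : a2 ≠ x := (np_partner_ne hM h2).1
  have hx4 : p2 ≠ x := (np_partner_ne hM h2).2
  have hp1m : p1 ∉ mVerts (M \ {s(a1,p1), s(a2,p2)}) := by rw [hmvd]; simp
  have hp2m : p2 ∉ mVerts (M \ {s(a1,p1), s(a2,p2)}) := by rw [hmvd]; simp
  obtain ⟨hmi, hmvi⟩ := matching_insert hmd hadj hp1m hp2m
  refine ⟨hmi, ?_⟩
  rw [hmvi, hmvd]
  ext v
  simp only [Set.mem_union, Set.mem_insert_iff, Set.mem_singleton_iff, Set.mem_diff,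
    Set.mem_compl_iff]
  constructor
  · rintro ((rfl | rfl) | ⟨hvx, hv⟩)
    · push_neg; exact ⟨hx2, ha1p1.symm, hp1a2⟩
    · push_neg; exact ⟨hx4, ha1p2.symm, ha2p2.symm⟩
    · push_neg
      exact ⟨hvx, fun h => hv (Or.inl h), fun h => hv (Or.inr (Or.inr (Or.inl h)))⟩
  · intro hv
    push_neg at hv
    obtain ⟨hvx, hva1, hva2⟩ := hv
    by_cases hvp1 : v = p1
    · exact Or.inl (Or.inl hvp1)
    · by_cases hvp2 : v = p2
      · exact Or.inl (Or.inr hvp2)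
      · refine Or.inr ⟨hvx, ?_⟩
        rintro (h | h | h | h)
        exacts [hva1 h, hvp1 h, hva2 h, hvp2 h]

lemma np_rewire2 {G : SimpleGraph V} {M : Set (Sym2 V)} {x a1 p1 a2 p2 : V}
    (hM : NP G M x) (h1 : s(a1,p1) ∈ M) (h2 : s(a2,p2) ∈ M)
    (hne : s(a1,p1) ≠ s(a2,p2)) (hadjp : G.Adj p1 p2) (hadja : G.Adj a1 a2) :
    NP G (insert s(a1,a2) (insert s(p1,p2) (M \ {s(a1,p1), s(a2,p2)}))) x := by
  obtain ⟨hmi, hmvi⟩ := np_rewire1 hM h1 h2 hne hadjp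
  have hdisj : ∀ v, ¬ (v ∈ (s(a1,p1) : Sym2 V) ∧ v ∈ (s(a2,p2) : Sym2 V)) :=
    hM.1.2 _ h1 _ h2 hne
  have hx1 : a1 ≠ x := (np_partner_ne hM h1).1
  have hx3 : a2 ≠ x := (np_partner_ne hM h2).1
  have ha1m : a1 ∉ mVerts (insert s(p1,p2) (M \ {s(a1,p1), s(a2,p2)})) := by
    rw [hmvi]; simp
  have ha2m : a2 ∉ mVerts (insert s(p1,p2) (M \ {s(a1,p1), s(a2,p2)})) := by
    rw [hmvi]; simp
  obtain ⟨hmi2, hmvi2⟩ := matching_insert hmi hadja ha1m ha2m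
  refine ⟨hmi2, ?_⟩
  rw [hmvi2, hmvi]
  ext v
  simp only [Set.mem_union, Set.mem_insert_iff, Set.mem_singleton_iff, Set.mem_compl_iff]
  constructor
  · rintro ((rfl | rfl) | hv)
    · exact hx1
    · exact hx3
    · exact fun h => hv (Or.inl h)
  · intro hv
    by_cases h1' : v = a1
    · exact Or.inl (Or.inl h1')
    · by_cases h2' : v = a2
      · exact Or.inl (Or.inr h2')
      · refine Or.inr ?_
        rintro (h | h | h)
        exacts [hv h, h1' h, h2' h]

lemma np_add_edge {G : SimpleGraph V} {M : Set (Sym2 V)} {x u v : V}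
    (hm : IsMatchingSet G M) (hmv : mVerts M = ({x, u, v} : Set V)ᶜ)
    (hadj : G.Adj x u) (hvx : v ≠ x) (hvu : v ≠ u) :
    NP G (insert s(x,u) M) v := by
  have hxm : x ∉ mVerts M := by rw [hmv]; simp
  have hum : u ∉ mVerts M := by rw [hmv]; simp
  obtain ⟨hmi, hmvi⟩ := matching_insert hm hadj hxm hum
  refine ⟨hmi, ?_⟩
  rw [hmvi, hmv]
  ext w
  simp only [Set.mem_union, Set.mem_insert_iff, Set.mem_singleton_iff, Set.mem_compl_iff]
  constructor
  · rintro ((rfl | rfl) | hw)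
    · exact hvx.symm
    · exact hvu.symm
    · exact fun h => hw (Or.inr (Or.inr h))
  · intro hw
    by_cases h1' : w = x
    · exact Or.inl (Or.inl h1')
    · by_cases h2' : w = u
      · exact Or.inl (Or.inr h2')
      · refine Or.inr ?_
        rintro (h | h | h)
        exacts [h1' h, h2' h, hw h]

end Stmt16
namespace Stmt16

variable {V : Type*}

lemma mem_swap {M : Set (Sym2 V)} {a b : V} (h : s(a,b) ∈ M) : s(b,a) ∈ M := by
  rwa [Sym2.eq_swap] at h

/-- Even alternating paths from `x` (snoc form), with vertex support `S`. -/
inductive EA (G : SimpleGraph V) (M : Set (Sym2 V)) (x : V) : V → Set V → Prop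
  | refl : EA G M x x {x}
  | snoc {r y z : V} {S : Set V} : EA G M x r S → G.Adj r y → s(r,y) ∉ M →
      s(y,z) ∈ M → y ∉ S → z ∉ S → EA G M x z (S ∪ {y, z})

/-- Evenly reachable vertices. -/
def REv (G : SimpleGraph V) (M : Set (Sym2 V)) (x : V) (r : V) : Prop :=
  ∃ S, EA G M x r S

/-- All reachable vertices. -/
def Rch (G : SimpleGraph V) (M : Set (Sym2 V)) (x : V) (v : V) : Prop :=
  ∃ r S, EA G M x r S ∧ v ∈ S

variable {G : SimpleGraph V} {M : Set (Sym2 V)} {x : V}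

lemma ea_mem {r : V} {S : Set V} (h : EA G M x r S) : r ∈ S := by
  induction h with
  | refl => exact rfl
  | snoc _ _ _ _ _ _ _ => simp

lemma rch_x : Rch G M x x := ⟨x, {x}, EA.refl, rfl⟩

lemma rev_rch {r : V} (h : REv G M x r) : Rch G M x r := by
  obtain ⟨S, ea⟩ := h
  exact ⟨r, S, ea, ea_mem ea⟩

lemma ea_flip (hM : NP G M x) {r : V} {S : Set V} (h : EA G M x r S) :
    ∃ M', NP G M' r ∧ ∀ e : Sym2 V, (∃ v ∈ e, v ∉ S) → (e ∈ M ↔ e ∈ M') := by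
  induction h with
  | refl => exact ⟨M, hM, fun e _ => Iff.rfl⟩
  | @snoc r y z S ea hadj hnm hyz hyS hzS IH =>
    obtain ⟨M1, hM1, hdiff⟩ := IH
    have hyzM1 : s(y,z) ∈ M1 := (hdiff _ ⟨y, Sym2.mem_mk_left y z, hyS⟩).mp hyz
    have hrS : r ∈ S := ea_mem ea
    refine ⟨insert s(r,y) (M1 \ {s(y,z)}), (np_swap hM1 hadj hyzM1).1, ?_⟩
    rintro e ⟨v, hve, hvS⟩
    have hvS' : v ∉ S := fun h => hvS (Set.mem_union_left _ h)
    have hvy : v ≠ y := fun h => hvS (Set.mem_union_right _ (by simp [h]))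
    have hvz : v ≠ z := fun h => hvS (Set.mem_union_right _ (by simp [h]))
    have base : e ∈ M ↔ e ∈ M1 := hdiff e ⟨v, hve, hvS'⟩
    have hery : e ≠ s(r,y) := by
      rintro rfl
      rw [Sym2.mem_iff] at hve
      rcases hve with rfl | rfl
      · exact hvS' hrS
      · exact hvy rfl
    have heyz : e ≠ s(y,z) := by
      rintro rfl
      rw [Sym2.mem_iff] at hve
      rcases hve with rfl | rfl
      · exact hvy rfl
      · exact hvz rfl
    rw [base]
    simp [hery, heyz]

lemma rev_dset (hM : NP G M x) {r : V} (h : REv G M x r) : r ∈ Dset G := by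
  obtain ⟨S, ea⟩ := h
  obtain ⟨M', hM', _⟩ := ea_flip hM ea
  exact ⟨M', hM'⟩

lemma ksl (hM : NP G M x) {r : V} {S : Set V} (h : EA G M x r S) :
    ∀ v ∈ S, REv G M x v ∨ ∃ p, s(v,p) ∈ M ∧ REv G M x p := by
  induction h with
  | refl =>
    intro v hv
    obtain rfl : x = v := (Set.eq_of_mem_singleton hv).symm
    exact Or.inl ⟨{x}, EA.refl⟩
  | @snoc r y z S ea hadj hnm hyz hyS hzS IH =>
    rintro v hv
    rcases hv with hv | hv
    · exact IH v hv
    · rcases hv with rfl | rfl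
      · exact Or.inr ⟨z, hyz, ⟨_, EA.snoc ea hadj hnm hyz hyS hzS⟩⟩
      · exact Or.inl ⟨_, EA.snoc ea hadj hnm hyz hyS hzS⟩

lemma pl (hM : NP G M x) {r : V} {S : Set V} (h : EA G M x r S) :
    (∀ e ∈ M, r ∉ e) ∨ ∃ p ∈ S, s(r,p) ∈ M := by
  induction h with
  | refl =>
    left
    have hx : x ∉ mVerts M := by rw [hM.2]; simp
    exact fun e he hre => hx ⟨e, he, hre⟩
  | @snoc r y z S ea hadj hnm hyz hyS hzS IH =>
    right
    exact ⟨y, Set.mem_union_right _ (by simp), mem_swap hyz⟩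

lemma odd_struct (hM : NP G M x) {r : V} {S : Set V} (h : EA G M x r S) :
    ∀ t ∈ S, ¬ REv G M x t →
      ∃ r' S' p, EA G M x r' S' ∧ G.Adj r' t ∧ s(r',t) ∉ M ∧ t ∉ S' ∧ p ∉ S' ∧
        s(t,p) ∈ M ∧ REv G M x p ∧ r' ∈ S' ∧ t ≠ p := by
  induction h with
  | refl =>
    intro t hv ht
    obtain rfl : x = t := (Set.eq_of_mem_singleton hv).symm
    exact absurd ⟨{x}, EA.refl⟩ ht
  | @snoc r y z S ea hadj hnm hyz hyS hzS IH =>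
    rintro t hv ht
    rcases hv with hv | hv
    · exact IH t hv ht
    · rcases hv with rfl | rfl
      · exact ⟨r, S, z, ea, hadj, hnm, hyS, hzS, hyz,
          ⟨_, EA.snoc ea hadj hnm hyz hyS hzS⟩, ea_mem ea, ne_of_mem hM.1 hyz⟩
      · exact absurd ⟨_, EA.snoc ea hadj hnm hyz hyS hzS⟩ ht

lemma ext_kill (hM : NP G M x) {r c : V} (hrev : REv G M x r) (hadj : G.Adj r c)
    (hc : ¬ Rch G M x c) : False := by
  obtain ⟨S, ea⟩ := hrev
  have hcS : c ∉ S := fun h => hc ⟨r, S, ea, h⟩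
  by_cases hrc : s(r,c) ∈ M
  · rcases pl hM ea with hexp | ⟨p, hpS, hrp⟩
    · exact hexp _ hrc (Sym2.mem_mk_left r c)
    · have hpc : p = c := partner_unique hM.1 hrp hrc
      exact hcS (hpc ▸ hpS)
  · have hcx : c ≠ x := fun h => hc (h ▸ rch_x)
    obtain ⟨c', hcc'⟩ := exists_partner hM hcx
    by_cases hc'S : c' ∈ S
    · rcases ksl hM ea c' hc'S with hrev' | ⟨p, hc'p, hrevp⟩
      · obtain ⟨S2, ea2⟩ := hrev'
        rcases pl hM ea2 with hexp | ⟨p2, hp2S, hc'p2⟩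
        · exact hexp _ hcc' (Sym2.mem_mk_right c c')
        · have : p2 = c := partner_unique hM.1 hc'p2 (mem_swap hcc')
          exact hc ⟨c', S2, ea2, this ▸ hp2S⟩
      · have : p = c := partner_unique hM.1 hc'p (mem_swap hcc')
        exact hc (this ▸ rev_rch hrevp)
    · have hext : EA G M x c' (S ∪ {c, c'}) := EA.snoc ea hadj hrc hcc' hcS hc'S
      exact hc ⟨c', _, hext, Set.mem_union_right _ (by simp)⟩

lemma not_rch_partner (hM : NP G M x) {c c' : V} (hcc' : s(c,c') ∈ M)
    (hc : ¬ Rch G M x c) : ¬ Rch G M x c' := by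
  intro hr
  obtain ⟨r2, S2, ea2, hc'S2⟩ := hr
  rcases ksl hM ea2 c' hc'S2 with hrev' | ⟨p2, hc'p2, hrevp2⟩
  · obtain ⟨S3, ea3⟩ := hrev'
    rcases pl hM ea3 with hexp | ⟨p3, hp3S, hc'p3⟩
    · exact hexp _ hcc' (Sym2.mem_mk_right c c')
    · have : p3 = c := partner_unique hM.1 hc'p3 (mem_swap hcc')
      exact hc ⟨c', S3, ea3, this ▸ hp3S⟩
  · have : p2 = c := partner_unique hM.1 hc'p2 (mem_swap hcc')
    exact hc (this ▸ rev_rch hrevp2)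

lemma c2_kill [Fintype V] (hodd : Odd (Fintype.card V)) (heq : Equimatchable G)
    (hM : NP G M x) {t c : V} (ht : Rch G M x t) (htodd : ¬ REv G M x t)
    (hadj : G.Adj t c) (hc : ¬ Rch G M x c) : False := by
  obtain ⟨r0, S0, ea0, htS0⟩ := ht
  obtain ⟨r', S', p, ea', har't, hnm, htS', hpS', htp, hrevp, hr'S', htpne⟩ :=
    odd_struct hM ea0 t htS0 htodd
  have hcx : c ≠ x := fun h => hc (h ▸ rch_x)
  obtain ⟨c', hcc'⟩ := exists_partner hM hcx
  have hc' : ¬ Rch G M x c' := not_rch_partner hM hcc' hc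
  obtain ⟨M1, hM1, hdiff⟩ := ea_flip hM ea'
  have hSr : ∀ v ∈ S', Rch G M x v := fun v hv => ⟨r', S', ea', hv⟩
  have hcS' : c ∉ S' := fun h => hc (hSr c h)
  have hc'S' : c' ∉ S' := fun h => hc' (hSr c' h)
  have htpM1 : s(t,p) ∈ M1 := (hdiff _ ⟨t, Sym2.mem_mk_left t p, htS'⟩).mp htp
  have hccM1 : s(c,c') ∈ M1 := (hdiff _ ⟨c, Sym2.mem_mk_left c c', hcS'⟩).mp hcc'
  -- distinctness facts
  have htc : t ≠ c := hadj.ne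
  have htRch : Rch G M x t := ⟨r0, S0, ea0, htS0⟩
  have htc' : t ≠ c' := fun h => hc' (h ▸ htRch)
  have hpc : p ≠ c := fun h => hc (h ▸ rev_rch hrevp)
  have hpc' : p ≠ c' := fun h => hc' (h ▸ rev_rch hrevp)
  have h1 : s(p,t) ∈ M1 := mem_swap htpM1
  have h2 : s(c',c) ∈ M1 := mem_swap hccM1
  have hne12 : s(p,t) ≠ s(c',c) := by
    intro h
    have : (p : V) ∈ s(c',c) := h ▸ Sym2.mem_mk_left p t
    rw [Sym2.mem_iff] at this
    rcases this with h' | h'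
    · exact hpc' h'
    · exact hpc h'
  obtain ⟨hm2, hmv2⟩ := np_rewire1 hM1 h1 h2 hne12 hadj
  have hr'p : ¬ G.Adj r' p := by
    intro h
    have hnm2 : s(r',p) ∉ M := by
      intro hmem
      have : r' = t := partner_unique hM.1 (mem_swap hmem) (mem_swap htp)
      exact htS' (this ▸ hr'S')
    have hext : EA G M x t (S' ∪ {p, t}) := EA.snoc ea' h hnm2 (mem_swap htp) hpS' htS'
    exact htodd ⟨_, hext⟩
  have hr'c' : ¬ G.Adj r' c' := fun h => ext_kill hM ⟨S', ea'⟩ h hc'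
  have hpc'adj : ¬ G.Adj p c' := fun h => ext_kill hM hrevp h hc'
  have hr'pne : r' ≠ p := fun h => hpS' (h ▸ hr'S')
  exact kill3 hodd heq hM hm2 hmv2 hr'pne hr'p hr'c' hpc'adj

lemma crossing (hc : G.Connected) {S : Set V} {u v : V} (hu : u ∈ S) (hv : v ∉ S) :
    ∃ a b, a ∈ S ∧ b ∉ S ∧ G.Adj a b := by
  suffices H : ∀ (u' v' : V) (_ : G.Walk u' v'), u' ∈ S → v' ∉ S →
      ∃ a b, a ∈ S ∧ b ∉ S ∧ G.Adj a b by
    obtain ⟨w⟩ := hc.preconnected u v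
    exact H u v w hu hv
  intro u' v' p
  induction p with
  | nil => intro h hnv; exact absurd h hnv
  | @cons a b c hadj p ih =>
    intro h hnv
    by_cases h2 : b ∈ S
    · exact ih h2 hnv
    · exact ⟨a, b, h, h2, hadj⟩

lemma rch_univ [Fintype V] (hcon : G.Connected) (hodd : Odd (Fintype.card V))
    (heq : Equimatchable G) (hM : NP G M x) : ∀ v, Rch G M x v := by
  by_contra h
  push_neg at h
  obtain ⟨v, hv⟩ := h
  obtain ⟨a, b, haR, hbR, hab⟩ := crossing (S := {v | Rch G M x v}) hcon rch_x hv
  by_cases hrev : REv G M x a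
  · exact ext_kill hM hrev hab hbR
  · exact c2_kill hodd heq hM haR hrev hab hbR

/-- Key structural lemma: the partner of a non-exposable vertex is exposable. -/
lemma s1 [Fintype V] (hcon : G.Connected) (hodd : Odd (Fintype.card V))
    (heq : Equimatchable G) (hM : NP G M x) {b : V} (hb : b ∉ Dset G) :
    ∃ p, s(b,p) ∈ M ∧ p ∈ Dset G := by
  obtain ⟨r, S, ea, hbS⟩ := rch_univ hcon hodd heq hM b
  rcases ksl hM ea b hbS with hrev | ⟨p, hbp, hrevp⟩
  · exact absurd (rev_dset hM hrev) hb
  · exact ⟨p, hbp, rev_dset hM hrevp⟩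

end Stmt16
namespace Stmt16

variable {V : Type*}

/-- The goal: an independent triple of exposable vertices. -/
def DTriple (G : SimpleGraph V) : Prop :=
  ∃ u v w : V, u ∈ Dset G ∧ v ∈ Dset G ∧ w ∈ Dset G ∧ u ≠ v ∧ u ≠ w ∧ v ≠ w ∧
    ¬ G.Adj u v ∧ ¬ G.Adj u w ∧ ¬ G.Adj v w

section Main

variable {G : SimpleGraph V} [Fintype V]

/-- Two non-exposable vertices are never adjacent. -/
lemma a_indep (hcon : G.Connected) (hodd : Odd (Fintype.card V)) (heq : Equimatchable G)
    {M0 : Set (Sym2 V)} {x0 : V} (hM0 : NP G M0 x0) {a1 a2 : V}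
    (h1 : a1 ∉ Dset G) (h2 : a2 ∉ Dset G) (hadj : G.Adj a1 a2) : False := by
  obtain ⟨p1, hap1, hp1D⟩ := s1 hcon hodd heq hM0 h1
  obtain ⟨p2, hap2, hp2D⟩ := s1 hcon hodd heq hM0 h2
  have ha12 : a1 ≠ a2 := hadj.ne
  have hp12 : p1 ≠ p2 := by
    rintro rfl
    exact ha12 (partner_unique hM0.1 (mem_swap hap1) (mem_swap hap2))
  have ha1p2 : a1 ≠ p2 := fun h => h1 (h ▸ hp2D)
  have hne : s(a1,p1) ≠ s(a2,p2) := by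
    intro h
    have : (a1 : V) ∈ s(a2,p2) := h ▸ Sym2.mem_mk_left a1 p1
    rw [Sym2.mem_iff] at this
    rcases this with h' | h'
    · exact ha12 h'
    · exact ha1p2 h'
  by_cases hpp : G.Adj p1 p2
  · have hnp4 := np_rewire2 hM0 hap1 hap2 hne hpp hadj
    obtain ⟨q, hq, hqD⟩ := s1 hcon hodd heq hnp4 h1
    have hqa2 : q = a2 := partner_unique hnp4.1 hq (Set.mem_insert _ _)
    exact h2 (hqa2 ▸ hqD)
  · have hne' : s(p1,a1) ≠ s(p2,a2) := by
      intro h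
      have : (p1 : V) ∈ s(p2,a2) := h ▸ Sym2.mem_mk_left p1 a1
      rw [Sym2.mem_iff] at this
      rcases this with h' | h'
      · exact hp12 h'
      · exact h2 (h' ▸ hp1D)
    obtain ⟨hm5, hmv5⟩ := np_rewire1 hM0 (mem_swap hap1) (mem_swap hap2) hne' hadj
    have hp2x0 : p2 ≠ x0 := (np_partner_ne hM0 hap2).2
    have hp1x0 : p1 ≠ x0 := (np_partner_ne hM0 hap1).2
    by_cases hx1 : G.Adj x0 p1
    · have hnp6 := np_add_edge hm5 hmv5 hx1 hp2x0 hp12.symm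
      obtain ⟨q, hq, hqD⟩ := s1 hcon hodd heq hnp6 h1
      have hqa2 : q = a2 := partner_unique hnp6.1 hq
        (Set.mem_insert_iff.mpr (Or.inr (Set.mem_insert _ _)))
      exact h2 (hqa2 ▸ hqD)
    · by_cases hx2 : G.Adj x0 p2
      · have hperm : ({x0, p1, p2} : Set V) = {x0, p2, p1} := by
          ext w; simp; tauto
        have hnp6 := np_add_edge hm5 (hmv5.trans (by rw [hperm])) hx2 hp1x0 hp12
        obtain ⟨q, hq, hqD⟩ := s1 hcon hodd heq hnp6 h1
        have hqa2 : q = a2 := partner_unique hnp6.1 hq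
          (Set.mem_insert_iff.mpr (Or.inr (Set.mem_insert _ _)))
        exact h2 (hqa2 ▸ hqD)
      · exact kill3 hodd heq hM0 hm5 hmv5 hp1x0.symm hx1 hx2 hpp

/-- If there are two distinct non-exposable vertices, we can build an independent
triple of exposable vertices. -/
lemma akill (hcon : G.Connected) (hodd : Odd (Fintype.card V)) (heq : Equimatchable G)
    {M0 : Set (Sym2 V)} {x0 : V} (hM0 : NP G M0 x0) {a1 a2 : V}
    (h1 : a1 ∉ Dset G) (h2 : a2 ∉ Dset G) (ha : a1 ≠ a2) : DTriple G := by
  obtain ⟨p1, hap1, hp1D⟩ := s1 hcon hodd heq hM0 h1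
  obtain ⟨p2, hap2, hp2D⟩ := s1 hcon hodd heq hM0 h2
  have hp12 : p1 ≠ p2 := by
    rintro rfl
    exact ha (partner_unique hM0.1 (mem_swap hap1) (mem_swap hap2))
  have hx0p1 : ¬ G.Adj x0 p1 := by
    intro h
    exact h1 ((np_swap hM0 h (mem_swap hap1)).2.2.2.2)
  have hx0p2 : ¬ G.Adj x0 p2 := by
    intro h
    exact h2 ((np_swap hM0 h (mem_swap hap2)).2.2.2.2)
  have ha1p2 : a1 ≠ p2 := fun h => h1 (h ▸ hp2D)
  have hne : s(a1,p1) ≠ s(a2,p2) := by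
    intro h
    have : (a1 : V) ∈ s(a2,p2) := h ▸ Sym2.mem_mk_left a1 p1
    rw [Sym2.mem_iff] at this
    rcases this with h' | h'
    · exact ha h'
    · exact ha1p2 h'
  have ha1x0 : a1 ≠ x0 := (np_partner_ne hM0 hap1).1
  have ha2x0 : a2 ≠ x0 := (np_partner_ne hM0 hap2).1
  have hpp : ¬ G.Adj p1 p2 := by
    intro hpp
    obtain ⟨hm4, hmv4⟩ := np_rewire1 hM0 hap1 hap2 hne hpp
    by_cases hxa1 : G.Adj x0 a1
    · have hnp6 := np_add_edge hm4 hmv4 hxa1 ha2x0 ha.symm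
      exact h2 ⟨_, hnp6⟩
    · by_cases hxa2 : G.Adj x0 a2
      · have hperm : ({x0, a1, a2} : Set V) = {x0, a2, a1} := by
          ext w; simp; tauto
        have hnp6 := np_add_edge hm4 (hmv4.trans (by rw [hperm])) hxa2 ha1x0 ha
        exact h1 ⟨_, hnp6⟩
      · exact kill3 hodd heq hM0 hm4 hmv4 ha1x0.symm hxa1 hxa2
          (fun h => a_indep hcon hodd heq hM0 h1 h2 h)
  exact ⟨x0, p1, p2, ⟨M0, hM0⟩, hp1D, hp2D,
    (np_partner_ne hM0 hap1).2.symm, (np_partner_ne hM0 hap2).2.symm, hp12,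
    hx0p1, hx0p2, hpp⟩

/-- The final kill: a unique non-exposable vertex in an independent triple. -/
lemma final_kill (hcon : G.Connected) (hodd : Odd (Fintype.card V))
    (heq : Equimatchable G) {a d d' : V} (ha : a ∉ Dset G)
    (huniq : ∀ b, b ∉ Dset G → b = a) (hd : d ∈ Dset G) (hd' : d' ∈ Dset G)
    (hdd' : d ≠ d') (h1 : ¬ G.Adj d d') (h2 : ¬ G.Adj d a) (h3 : ¬ G.Adj d' a) :
    DTriple G := by
  obtain ⟨Md, hMd⟩ := hd
  have had : a ≠ d := fun h => ha (h ▸ ⟨Md, hMd⟩)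
  obtain ⟨p, hap, hpD⟩ := s1 hcon hodd heq hMd ha
  have hAdjap : G.Adj a p := adj_of_mem hMd.1 hap
  have hpd' : p ≠ d' := by
    rintro rfl
    exact h3 hAdjap.symm
  have hpd : p ≠ d := (np_partner_ne hMd hap).2
  by_cases hdp : G.Adj d p
  · exact absurd ((np_swap hMd hdp (mem_swap hap)).2.2.2.2) ha
  · by_cases hpd'adj : G.Adj p d'
    · obtain ⟨w, hd'w⟩ := exists_partner hMd hdd'.symm
      have hwa : w ≠ a := by
        rintro rfl
        exact hpd' (partner_unique hMd.1 (mem_swap hd'w) hap).symm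
      have hwD : w ∈ Dset G := by
        by_contra h
        exact hwa (huniq w h)
      have hwd : w ≠ d := (np_partner_ne hMd hd'w).2
      have had' : a ≠ d' := fun h => ha (h.symm ▸ hd')
      have hwp : w ≠ p := by
        intro h
        exact had' (partner_unique hMd.1 (mem_swap hap) (mem_swap (h ▸ hd'w)))
      have hwd' : w ≠ d' := (ne_of_mem hMd.1 hd'w).symm
      by_cases hdw : G.Adj d w
      · have hsw := np_swap hMd hdw (mem_swap hd'w)
        have hM'' := hsw.1
        have hapM'' : s(p,a) ∈ insert s(d,w) (Md \ {s(w,d')}) := by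
          refine Set.mem_insert_iff.mpr (Or.inr ⟨mem_swap hap, ?_⟩)
          simp only [Set.mem_singleton_iff]
          intro h
          have : (p : V) ∈ s(w,d') := h ▸ Sym2.mem_mk_left p a
          rw [Sym2.mem_iff] at this
          rcases this with h' | h'
          · exact hwp h'.symm
          · exact hpd' h'
        exact absurd ((np_swap hM'' hpd'adj.symm hapM'').2.2.2.2) ha
      · by_cases hpw : G.Adj p w
        · have hne' : s(a,p) ≠ s(d',w) := by
            intro h
            have : (a : V) ∈ s(d',w) := h ▸ Sym2.mem_mk_left a p
            rw [Sym2.mem_iff] at this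
            rcases this with h' | h'
            · exact had' h'
            · exact hwa h'.symm
          obtain ⟨hm7, hmv7⟩ := np_rewire1 hMd hap hd'w hne' hpw
          exact (kill3 hodd heq hMd hm7 hmv7 had.symm
            h2 h1 (fun h => h3 h.symm)).elim
        · exact ⟨d, p, w, ⟨Md, hMd⟩, hpD, hwD, hpd.symm, hwd.symm, hwp.symm,
            hdp, hdw, hpw⟩
    · exact ⟨d, d', p, ⟨Md, hMd⟩, hd', hpD, hdd', hpd.symm, hpd'.symm, h1, hdp,
        fun h => hpd'adj h.symm⟩

end Main

end Stmt16
namespace Stmt16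

variable {V : Type*}

lemma dtriple_main {G : SimpleGraph V} [Fintype V] (hodd : Odd (Fintype.card V))
    (hcon : G.Connected) (heq : Equimatchable G)
    (hnp : ∃ M, IsNearPerfectMatchingSet G M)
    {e f g : V} (hef : e ≠ f) (heg : e ≠ g) (hfg : f ≠ g)
    (hef' : ¬ G.Adj e f) (heg' : ¬ G.Adj e g) (hfg' : ¬ G.Adj f g) : DTriple G := by
  obtain ⟨M0, hm0, w0, hw0⟩ := hnp
  have hM0 : NP G M0 w0 := ⟨hm0, hw0⟩
  by_contra hno
  have huniq : ∀ b1, b1 ∉ Dset G → ∀ b2, b2 ∉ Dset G → b1 = b2 := by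
    intro b1 hb1 b2 hb2
    by_contra hne
    exact hno (akill hcon hodd heq hM0 hb1 hb2 hne)
  by_cases he : e ∈ Dset G
  · by_cases hf : f ∈ Dset G
    · by_cases hg : g ∈ Dset G
      · exact hno ⟨e, f, g, he, hf, hg, hef, heg, hfg, hef', heg', hfg'⟩
      · exact hno (final_kill hcon hodd heq hg (fun b hb => huniq b hb g hg)
          he hf hef hef' heg' hfg')
    · by_cases hg : g ∈ Dset G
      · exact hno (final_kill hcon hodd heq hf (fun b hb => huniq b hb f hf)
          he hg heg heg' hef' (fun h => hfg' h.symm))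
      · exact hfg (huniq f hf g hg)
  · by_cases hf : f ∈ Dset G
    · by_cases hg : g ∈ Dset G
      · exact hno (final_kill hcon hodd heq he (fun b hb => huniq b hb e he)
          hf hg hfg hfg' (fun h => hef' h.symm) (fun h => heg' h.symm))
      · exact heg (huniq e he g hg)
    · exact hef (huniq e he f hf)

lemma dset_pm {G : SimpleGraph V} {v : V} (hv : v ∈ Dset G) :
    ∃ M, IsPerfectMatchingSet (delVerts G {v}) M := by
  classical
  obtain ⟨M, hM⟩ := hv
  refine ⟨{e | Sym2.map Subtype.val e ∈ M}, ⟨?_, ?_⟩, ?_⟩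
  · intro e he
    obtain ⟨⟨a, b⟩, rfl⟩ := e.exists_rep
    have he' : s((a : V), (b : V)) ∈ M := by
      simpa using he
    rw [SimpleGraph.mem_edgeSet]
    exact adj_of_mem hM.1 he'
  · intro e' he' f' hf' hne u
    rintro ⟨hu1, hu2⟩
    have hinj : Function.Injective (Subtype.val : ↥(({v} : Set V)ᶜ) → V) :=
      Subtype.val_injective
    have hmapne : Sym2.map Subtype.val e' ≠ Sym2.map Subtype.val f' := by
      intro h
      exact hne (Sym2.map.injective hinj h)
    refine hM.1.2 _ he' _ hf' hmapne (u : V) ⟨?_, ?_⟩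
    · exact Sym2.mem_map.mpr ⟨u, hu1, rfl⟩
    · exact Sym2.mem_map.mpr ⟨u, hu2, rfl⟩
  · rintro ⟨u, hu⟩
    have huv : u ≠ v := by simpa using hu
    have hum : u ∈ mVerts M := by rw [hM.2]; simpa using huv
    obtain ⟨e, he, hue⟩ := hum
    obtain ⟨w, rfl⟩ := Sym2.mem_iff_exists.mp hue
    have hwv : w ≠ v := by
      have h2 := (mem_mVerts_of he).2
      rw [hM.2] at h2
      simpa using h2
    refine ⟨s(⟨u, hu⟩, ⟨w, by simpa using hwv⟩), ?_, Sym2.mem_mk_left _ _⟩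
    show Sym2.map Subtype.val _ ∈ M
    simpa using he

end Stmt16
theorem stmt16 [Fintype V] (G : SimpleGraph V)
    (hodd : Odd (Fintype.card V)) (hc : G.Connected)
    (heq : Equimatchable G) (hnp : ∃ M, IsNearPerfectMatchingSet G M)
    (hα : 2 < _root_.indepNum G) :
    ∃ S : Set V, S.ncard = 3 ∧ (S.Pairwise fun u v => ¬ G.Adj u v) ∧
      ∀ v ∈ S, ∃ M, IsPerfectMatchingSet (delVerts G {v}) M := by
  classical
  -- extract an independent triple from the independence number hypothesis
  have hne : {n | ∃ S : Set V, (S.Pairwise fun u v => ¬ G.Adj u v) ∧ S.ncard = n}.Nonempty :=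
    ⟨0, ∅, by simp, by simp⟩
  have hbdd : BddAbove {n | ∃ S : Set V, (S.Pairwise fun u v => ¬ G.Adj u v) ∧ S.ncard = n} := by
    refine ⟨Fintype.card V, ?_⟩
    rintro n ⟨S, _, rfl⟩
    have h := Set.ncard_le_ncard (Set.subset_univ S) (Set.toFinite _)
    rwa [Set.ncard_univ, Nat.card_eq_fintype_card] at h
  have hmem := Nat.sSup_mem hne hbdd
  obtain ⟨S0, hS0p, hS0card⟩ := hmem
  rw [_root_.indepNum] at hα
  have h3 : 3 ≤ S0.ncard := by omega
  have hfin : S0.Finite := Set.toFinite _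
  obtain ⟨e, he⟩ : S0.Nonempty := by
    rw [← Set.ncard_pos hfin]; omega
  obtain ⟨f, hf⟩ : (S0 \ {e}).Nonempty := by
    rw [← Set.ncard_pos hfin.diff, Set.ncard_diff_singleton_of_mem he]; omega
  obtain ⟨g, hg⟩ : ((S0 \ {e}) \ {f}).Nonempty := by
    rw [← Set.ncard_pos hfin.diff.diff, Set.ncard_diff_singleton_of_mem hf,
      Set.ncard_diff_singleton_of_mem he]
    omega
  obtain ⟨⟨hgS, hgf⟩, hge⟩ : (g ∈ S0 ∧ g ∉ ({f} : Set V)) ∧ g ∉ ({e} : Set V) := by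
    obtain ⟨h1, h2⟩ := hg
    exact ⟨⟨h1.1, h2⟩, h1.2⟩
  obtain ⟨hfS, hfe⟩ := hf
  simp only [Set.mem_singleton_iff] at hfe hgf hge
  have hef : e ≠ f := fun h => hfe h.symm
  have heg : e ≠ g := fun h => hge h.symm
  have hfg : f ≠ g := fun h => hgf h.symm
  have hef' : ¬ G.Adj e f := hS0p he hfS hef
  have heg' : ¬ G.Adj e g := hS0p he hgS heg
  have hfg' : ¬ G.Adj f g := hS0p hfS hgS hfg
  obtain ⟨u, v, w, hu, hv, hw, huv, huw, hvw, hA1, hA2, hA3⟩ :=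
    Stmt16.dtriple_main hodd hc heq hnp hef heg hfg hef' heg' hfg'
  refine ⟨{u, v, w}, ?_, ?_, ?_⟩
  · rw [Set.ncard_insert_of_notMem (by simp [huv, huw]) (Set.toFinite _),
      Set.ncard_insert_of_notMem (by simp [hvw]) (Set.toFinite _), Set.ncard_singleton]
  · have hA1' : ¬ G.Adj v u := fun h => hA1 h.symm
    have hA2' : ¬ G.Adj w u := fun h => hA2 h.symm
    have hA3' : ¬ G.Adj w v := fun h => hA3 h.symm
    intro a ha b hb hab
    simp only [Set.mem_insert_iff, Set.mem_singleton_iff] at ha hb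
    rcases ha with rfl | rfl | rfl <;> rcases hb with rfl | rfl | rfl <;>
      first
        | exact absurd rfl hab
        | exact hA1
        | exact hA2
        | exact hA3
        | exact hA1'
        | exact hA2'
        | exact hA3'
  · intro z hz
    simp only [Set.mem_insert_iff, Set.mem_singleton_iff] at hz
    rcases hz with rfl | rfl | rfl
    · exact Stmt16.dset_pm hu
    · exact Stmt16.dset_pm hv
    · exact Stmt16.dset_pm hw
end

section
/- Let G be a graph such that G ⊠ H has a perfect matching for some graph H where both G and H are nontrivial and connected; if G ⊠ H is well-edge-dominated then G ⊠ H is K_4, i.e., both G and H are K_2. (Connected well-edge-dominated graphs with a perfect matching are K_4 or balanced complete bipartite, and strong products of nontrivial connected graphs contain triangles and at least 6 vertices unless both factors are K_2.) -/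
open SimpleGraph

variable {V : Type*} {W : Type*}

section Helpers

variable {U : Type*}

private lemma matching_eq {Γ : SimpleGraph U} {M : Set (Sym2 U)}
    (hM : IsMatchingSet Γ M) {e f : Sym2 U} (he : e ∈ M) (hf : f ∈ M)
    {v : U} (hv : v ∈ e) (hv' : v ∈ f) : e = f := by
  by_contra h
  exact hM.2 e he f hf h v ⟨hv, hv'⟩

private lemma pm_partner {Γ : SimpleGraph U} {M : Set (Sym2 U)}
    (hM : IsPerfectMatchingSet Γ M) (v : U) : ∃ w, s(v, w) ∈ M ∧ v ≠ w := by
  obtain ⟨e, heM, hve⟩ := hM.2 v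
  obtain ⟨w, rfl⟩ := Sym2.mem_iff_exists.1 hve
  refine ⟨w, heM, fun h => ?_⟩
  subst h
  exact Γ.loopless.irrefl v ((Γ.mem_edgeSet).1 (hM.1.1 heM))

private lemma pm_maxl {Γ : SimpleGraph U} {M : Set (Sym2 U)}
    (hM : IsPerfectMatchingSet Γ M) : IsMaxlMatching Γ M := by
  refine ⟨hM.1, fun M' hsub hM' => Set.Subset.antisymm ?_ hsub⟩
  intro g hg
  by_contra hgM
  have hgE : g ∈ Γ.edgeSet := hM'.1 hg
  induction g using Sym2.inductionOn with
  | hf u v =>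
    obtain ⟨e, heM, hue⟩ := hM.2 u
    have hne : e ≠ s(u, v) := fun h => hgM (h ▸ heM)
    exact hM'.2 e (hsub heM) _ hg hne u ⟨hue, Sym2.mem_mk_left u v⟩

private lemma maxl_minlEDS {Γ : SimpleGraph U} {M : Set (Sym2 U)}
    (hM : IsMaxlMatching Γ M) : IsMinlEDS Γ M := by
  constructor
  · refine ⟨hM.1.1, fun e he heM => ?_⟩
    by_contra hno
    push_neg at hno
    have hnew : IsMatchingSet Γ (insert e M) := by
      refine ⟨Set.insert_subset he hM.1.1, ?_⟩
      intro f hf g hg hfg v hv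
      rcases Set.mem_insert_iff.1 hf with rfl | hfM
      · rcases Set.mem_insert_iff.1 hg with rfl | hgM
        · exact hfg rfl
        · exact hno g hgM v hv.1 hv.2
      · rcases Set.mem_insert_iff.1 hg with rfl | hgM
        · exact hno f hfM v hv.2 hv.1
        · exact hM.1.2 f hfM g hgM hfg v hv
    have := hM.2 (insert e M) (Set.subset_insert e M) hnew
    exact heM (this ▸ Set.mem_insert e M)
  · intro F' hss hEDS
    obtain ⟨e, heM, heF⟩ := Set.exists_of_ssubset hss
    obtain ⟨f, hf, v, hv1, hv2⟩ := hEDS.2 e (hM.1.1 heM) heF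
    have hfM : f ∈ M := hss.1 hf
    have : e = f := matching_eq hM.1 heM hfM hv1 hv2
    exact heF (this ▸ hf)

private lemma two_ncard_le [Fintype U] {Γ : SimpleGraph U} {M : Set (Sym2 U)}
    (hM : IsMatchingSet Γ M) : 2 * M.ncard ≤ Fintype.card U := by
  classical
  have hrep : ∀ e : Sym2 U, ∃ p : U × U, s(p.1, p.2) = e := fun e => by
    induction e using Sym2.inductionOn with
    | hf a b => exact ⟨(a, b), rfl⟩
  choose g hg using hrep
  have hmem1 : ∀ e : Sym2 U, (g e).1 ∈ e := fun e => by
    have key : ∀ (p : U × U) (e' : Sym2 U), s(p.1, p.2) = e' → p.1 ∈ e' :=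
      fun p e' h => h ▸ Sym2.mem_mk_left p.1 p.2
    exact key (g e) e (hg e)
  have hmem2 : ∀ e : Sym2 U, (g e).2 ∈ e := fun e => by
    have key : ∀ (p : U × U) (e' : Sym2 U), s(p.1, p.2) = e' → p.2 ∈ e' :=
      fun p e' h => h ▸ Sym2.mem_mk_right p.1 p.2
    exact key (g e) e (hg e)
  set φ : ↥M × Bool → U := fun x => if x.2 then (g x.1.1).1 else (g x.1.1).2 with hφ
  have hφmem : ∀ (e : Sym2 U) (he : e ∈ M) (b : Bool), φ (⟨e, he⟩, b) ∈ e := by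
    intro e he b
    cases b
    · exact hmem2 e
    · exact hmem1 e
  have hinj : Function.Injective φ := by
    rintro ⟨⟨e, he⟩, b⟩ ⟨⟨f, hf⟩, b'⟩ hEq
    have hv1 := hφmem e he b
    have hv2 := hφmem f hf b'
    rw [hEq] at hv1
    have hef : e = f := (matching_eq hM hf he hv2 hv1).symm
    subst hef
    have hbb : b = b' := by
      by_contra hbb
      have hdiag : (g e).1 = (g e).2 := by
        cases b <;> cases b'
        · exact absurd rfl hbb
        · simpa [hφ] using hEq.symm
        · simpa [hφ] using hEq
        · exact absurd rfl hbb
      have : e.IsDiag := by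
        rw [← hg e]
        exact Sym2.mk_isDiag_iff.2 hdiag
      exact Γ.not_isDiag_of_mem_edgeSet (hM.1 he) this
    subst hbb
    rfl
  have hcard := Nat.card_le_card_of_injective φ hinj
  rw [Nat.card_prod, Nat.card_coe_set_eq, Nat.card_eq_fintype_card,
    Nat.card_eq_fintype_card] at hcard
  simpa [Fintype.card_bool, mul_comm] using hcard

private lemma swap_lemma [Fintype U] (Γ : SimpleGraph U) (hwed : WellEdgeDominated Γ)
    {M : Set (Sym2 U)} (hM : IsPerfectMatchingSet Γ M) {p q r s : U}
    (h1 : s(p, q) ∈ M) (h2 : s(r, s) ∈ M) (hne : s(p, q) ≠ s(r, s))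
    (hqr : Γ.Adj q r) :
    Γ.Adj p s ∧
      IsPerfectMatchingSet Γ ((M \ {s(p, q), s(r, s)}) ∪ {s(q, r), s(p, s)}) := by
  classical
  have hApq : Γ.Adj p q := (Γ.mem_edgeSet).1 (hM.1.1 h1)
  have hArs : Γ.Adj r s := (Γ.mem_edgeSet).1 (hM.1.1 h2)
  have hp2 : p ∉ s(r, s) := fun h => hne (matching_eq hM.1 h1 h2 (Sym2.mem_mk_left p q) h)
  have hq2 : q ∉ s(r, s) := fun h => hne (matching_eq hM.1 h1 h2 (Sym2.mem_mk_right p q) h)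
  have hpr : p ≠ r := fun h => hp2 (Sym2.mem_iff.2 (Or.inl h))
  have hps' : p ≠ s := fun h => hp2 (Sym2.mem_iff.2 (Or.inr h))
  have hqs : q ≠ s := fun h => hq2 (Sym2.mem_iff.2 (Or.inr h))
  have hqrM : s(q, r) ∉ M := by
    intro h
    have : s(q, r) = s(p, q) :=
      matching_eq hM.1 h h1 (Sym2.mem_mk_left q r) (Sym2.mem_mk_right p q)
    rcases Sym2.eq_iff.1 this with ⟨h', _⟩ | ⟨_, h'⟩
    · exact hApq.ne h'.symm
    · exact hpr h'.symm
  set D : Set (Sym2 U) := M \ {s(p, q), s(r, s)} with hD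
  have hDM : D ⊆ M := Set.diff_subset
  have hDfin : D.Finite := Set.toFinite _
  -- cardinality of M
  have hMeq : M = insert s(p, q) (insert s(r, s) D) := by
    ext x
    constructor
    · intro hx
      rcases eq_or_ne x s(p, q) with rfl | hx1
      · exact Set.mem_insert _ _
      rcases eq_or_ne x s(r, s) with rfl | hx2
      · exact Set.mem_insert_of_mem _ (Set.mem_insert _ _)
      · exact Set.mem_insert_of_mem _ (Set.mem_insert_of_mem _ ⟨hx, by simp [hx1, hx2]⟩)
    · rintro (rfl | rfl | hx)
      · exact h1
      · exact h2
      · exact hx.1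
  have hnm2 : s(r, s) ∉ D := by simp [hD]
  have hnm1 : s(p, q) ∉ insert s(r, s) D := by
    intro h
    rcases h with h | h
    · exact hne h
    · exact h.2 (Or.inl rfl)
  have hMcard : M.ncard = D.ncard + 2 := by
    rw [hMeq, Set.ncard_insert_of_notMem hnm1 (hDfin.insert _),
      Set.ncard_insert_of_notMem hnm2 hDfin]
  -- a matching-helper: new edge vs old edges
  have hD_no_pqrs : ∀ f ∈ D, ∀ v, v ∈ f → v ≠ p ∧ v ≠ q ∧ v ≠ r ∧ v ≠ s := by
    intro f hf v hvf
    refine ⟨fun h => ?_, fun h => ?_, fun h => ?_, fun h => ?_⟩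
    · exact hf.2 (Or.inl (matching_eq hM.1 (hDM hf) h1 (h ▸ hvf) (Sym2.mem_mk_left p q)))
    · exact hf.2 (Or.inl (matching_eq hM.1 (hDM hf) h1 (h ▸ hvf) (Sym2.mem_mk_right p q)))
    · exact hf.2 (Or.inr (matching_eq hM.1 (hDM hf) h2 (h ▸ hvf) (Sym2.mem_mk_left r s)))
    · exact hf.2 (Or.inr (matching_eq hM.1 (hDM hf) h2 (h ▸ hvf) (Sym2.mem_mk_right r s)))
  have hps : Γ.Adj p s := by
    by_contra hps
    set M1 : Set (Sym2 U) := insert s(q, r) D with hM1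
    have hM1match : IsMatchingSet Γ M1 := by
      constructor
      · exact Set.insert_subset ((Γ.mem_edgeSet).2 hqr)
          (fun f hf => hM.1.1 (hDM hf))
      · intro f hf g hg hfg v hv
        rcases Set.mem_insert_iff.1 hf with rfl | hfD
        · rcases Set.mem_insert_iff.1 hg with rfl | hgD
          · exact hfg rfl
          · obtain ⟨_, h2', h3', _⟩ := hD_no_pqrs g hgD v hv.2
            rcases Sym2.mem_iff.1 hv.1 with rfl | rfl
            · exact h2' rfl
            · exact h3' rfl
        · rcases Set.mem_insert_iff.1 hg with rfl | hgD
          · obtain ⟨_, h2', h3', _⟩ := hD_no_pqrs f hfD v hv.1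
            rcases Sym2.mem_iff.1 hv.2 with rfl | rfl
            · exact h2' rfl
            · exact h3' rfl
          · exact hM.1.2 f (hDM hfD) g (hDM hgD) hfg v hv
    have hM1maxl : IsMaxlMatching Γ M1 := by
      refine ⟨hM1match, fun M' hsub hM' => Set.Subset.antisymm ?_ hsub⟩
      intro g hg
      by_contra hgM1
      have hgE : g ∈ Γ.edgeSet := hM'.1 hg
      have hclaim : ∀ u, u ∈ g → u = p ∨ u = s := by
        intro u hug
        obtain ⟨e, heM, hue⟩ := hM.2 u
        by_cases heD : e ∈ D
        · exact absurd (hM'.2 e (hsub (Set.mem_insert_of_mem _ heD)) g hg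
            (fun h => hgM1 (h ▸ Set.mem_insert_of_mem _ heD)) u ⟨hue, hug⟩) not_false
        · have he12 : e = s(p, q) ∨ e = s(r, s) := by
            by_contra hcon
            push_neg at hcon
            exact heD ⟨heM, fun h => by
              rcases h with h | h
              · exact hcon.1 h
              · exact hcon.2 h⟩
          have hqrM' : s(q, r) ∈ M' := hsub (Set.mem_insert _ _)
          have hgne : g ≠ s(q, r) := fun h => hgM1 (h ▸ Set.mem_insert _ _)
          rcases he12 with rfl | rfl
          · rcases Sym2.mem_iff.1 hue with rfl | rfl
            · exact Or.inl rfl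
            · exact absurd (hM'.2 g hg _ hqrM' hgne u
                ⟨hug, Sym2.mem_mk_left u r⟩) not_false
          · rcases Sym2.mem_iff.1 hue with rfl | rfl
            · exact absurd (hM'.2 g hg _ hqrM' hgne u
                ⟨hug, Sym2.mem_mk_right q u⟩) not_false
            · exact Or.inr rfl
      induction g using Sym2.inductionOn with
      | hf u v =>
        have huv : u ≠ v := fun h =>
          Γ.not_isDiag_of_mem_edgeSet hgE (Sym2.mk_isDiag_iff.2 h)
        rcases hclaim u (Sym2.mem_mk_left u v) with rfl | rfl <;>
          rcases hclaim v (Sym2.mem_mk_right u v) with rfl | rfl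
        · exact huv rfl
        · exact hps ((Γ.mem_edgeSet).1 hgE)
        · exact hps ((Γ.mem_edgeSet).1 hgE).symm
        · exact huv rfl
    have hM1card : M1.ncard = D.ncard + 1 := by
      rw [hM1, Set.ncard_insert_of_notMem (fun h => hqrM (hDM h)) hDfin]
    have hle := hwed M M1 (maxl_minlEDS (pm_maxl hM)) (maxl_minlEDS hM1maxl).1
    omega
  refine ⟨hps, ?_, ?_⟩
  · -- the new set is a matching
    constructor
    · refine Set.union_subset (fun f hf => hM.1.1 (hDM hf)) ?_
      intro f hf
      rcases hf with rfl | hf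
      · exact (Γ.mem_edgeSet).2 hqr
      · rcases hf with rfl
        exact (Γ.mem_edgeSet).2 hps
    · intro f hf g hg hfg v hv
      have key : ∀ f', f' ∈ ({s(q, r), s(p, s)} : Set (Sym2 U)) → ∀ v', v' ∈ f' →
          v' = p ∨ v' = q ∨ v' = r ∨ v' = s := by
        rintro f' (rfl | hf') v' hv'
        · rcases Sym2.mem_iff.1 hv' with rfl | rfl
          · exact Or.inr (Or.inl rfl)
          · exact Or.inr (Or.inr (Or.inl rfl))
        · rcases hf' with rfl
          rcases Sym2.mem_iff.1 hv' with rfl | rfl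
          · exact Or.inl rfl
          · exact Or.inr (Or.inr (Or.inr rfl))
      rcases hf with hfD | hfP
      · rcases hg with hgD | hgP
        · exact hM.1.2 f (hDM hfD) g (hDM hgD) hfg v hv
        · obtain ⟨k1, k2, k3, k4⟩ := hD_no_pqrs f hfD v hv.1
          rcases key g hgP v hv.2 with rfl | rfl | rfl | rfl
          · exact k1 rfl
          · exact k2 rfl
          · exact k3 rfl
          · exact k4 rfl
      · rcases hg with hgD | hgP
        · obtain ⟨k1, k2, k3, k4⟩ := hD_no_pqrs g hgD v hv.2
          rcases key f hfP v hv.1 with rfl | rfl | rfl | rfl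
          · exact k1 rfl
          · exact k2 rfl
          · exact k3 rfl
          · exact k4 rfl
        · -- both among the two new edges, distinct
          rcases hfP with rfl | hfP <;> rcases hgP with rfl | hgP
          · exact hfg rfl
          · rcases hgP with rfl
            rcases Sym2.mem_iff.1 hv.1 with rfl | rfl <;>
              rcases Sym2.mem_iff.1 hv.2 with h | h
            · exact hApq.ne h.symm
            · exact hqs h
            · exact hpr h.symm
            · exact hArs.ne h
          · rcases hfP with rfl
            rcases Sym2.mem_iff.1 hv.2 with rfl | rfl <;>
              rcases Sym2.mem_iff.1 hv.1 with h | h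
            · exact hApq.ne h.symm
            · exact hqs h
            · exact hpr h.symm
            · exact hArs.ne h
          · rcases hfP with rfl; rcases hgP with rfl; exact hfg rfl
  · -- perfect
    intro v
    obtain ⟨e, heM, hve⟩ := hM.2 v
    by_cases he1 : e = s(p, q)
    · subst he1
      rcases Sym2.mem_iff.1 hve with rfl | rfl
      · exact ⟨s(v, s), Set.mem_union_right _ (Or.inr rfl), Sym2.mem_mk_left v s⟩
      · exact ⟨s(v, r), Set.mem_union_right _ (Or.inl rfl), Sym2.mem_mk_left v r⟩
    · by_cases he2 : e = s(r, s)
      · subst he2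
        rcases Sym2.mem_iff.1 hve with rfl | rfl
        · exact ⟨s(q, v), Set.mem_union_right _ (Or.inl rfl), Sym2.mem_mk_right q v⟩
        · exact ⟨s(p, v), Set.mem_union_right _ (Or.inr rfl), Sym2.mem_mk_right p v⟩
      · exact ⟨e, Set.mem_union_left _ ⟨heM, by simp [he1, he2]⟩, hve⟩

end Helpers
section Helpers2

variable {U : Type*}

private lemma core_lemma [Fintype U] (Γ : SimpleGraph U) (hwed : WellEdgeDominated Γ)
    {M : Set (Sym2 U)} (hM : IsPerfectMatchingSet Γ M) {x1 x2 y z : U}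
    (h12 : Γ.Adj x1 x2) (h1y : Γ.Adj x1 y) (hyz : Γ.Adj y z)
    (h1z : x1 ≠ z) (h2y : x2 ≠ y) (h2z : x2 ≠ z) (hn : ¬ Γ.Adj x2 z) : False := by
  classical
  -- Step 1: a perfect matching containing s(y, z)
  obtain ⟨M1, hM1, hyzM1⟩ : ∃ M1, IsPerfectMatchingSet Γ M1 ∧ s(y, z) ∈ M1 := by
    obtain ⟨w, hw, hwy⟩ := pm_partner hM y
    by_cases hwz : w = z
    · exact ⟨M, hM, hwz ▸ hw⟩
    · obtain ⟨q', hq', hzq⟩ := pm_partner hM z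
      have hne : s(w, y) ≠ s(z, q') := by
        intro h
        rcases Sym2.eq_iff.1 h with ⟨h', _⟩ | ⟨_, h'⟩
        · exact hwz h'
        · exact hyz.ne h'
      have hsw := swap_lemma Γ hwed hM (p := w) (q := y) (r := z) (s := q')
        (Sym2.eq_swap ▸ hw) hq' hne hyz
      exact ⟨_, hsw.2, Set.mem_union_right _ (Or.inl rfl)⟩
  -- Step 2: a perfect matching containing s(y, z) and s(x1, x2)
  obtain ⟨M2, hM2, hyzM2, h12M2⟩ :
      ∃ M2, IsPerfectMatchingSet Γ M2 ∧ s(y, z) ∈ M2 ∧ s(x1, x2) ∈ M2 := by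
    obtain ⟨p1, hp1, h1p1⟩ := pm_partner hM1 x1
    by_cases hp12 : p1 = x2
    · exact ⟨M1, hM1, hyzM1, hp12 ▸ hp1⟩
    · obtain ⟨p2, hp2, h2p2⟩ := pm_partner hM1 x2
      have hne : s(p1, x1) ≠ s(x2, p2) := by
        intro h
        rcases Sym2.eq_iff.1 h with ⟨h', _⟩ | ⟨_, h'⟩
        · exact hp12 h'
        · exact h12.ne h'
      have hsw := swap_lemma Γ hwed hM1 (p := p1) (q := x1) (r := x2) (s := p2)
        (Sym2.eq_swap ▸ hp1) hp2 hne h12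
      refine ⟨_, hsw.2, ?_, Set.mem_union_right _ (Or.inl rfl)⟩
      refine Set.mem_union_left _ ⟨hyzM1, ?_⟩
      intro h
      rcases h with h | h
      · rcases Sym2.eq_iff.1 h with ⟨_, h'⟩ | ⟨h', _⟩
        · exact h1z h'.symm
        · exact h1y.ne h'.symm
      · rcases h with h
        rcases Sym2.eq_iff.1 h with ⟨h', _⟩ | ⟨_, h'⟩
        · exact h2y h'.symm
        · exact h2z h'.symm
  -- Step 3
  have hne : s(x2, x1) ≠ s(y, z) := by
    intro h
    rcases Sym2.eq_iff.1 h with ⟨h', _⟩ | ⟨h', _⟩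
    · exact h2y h'
    · exact h2z h'
  exact hn (swap_lemma Γ hwed hM2 (p := x2) (q := x1) (r := y) (s := z)
    (Sym2.eq_swap ▸ h12M2) hyzM2 hne h1y).1

private lemma exists_inducedP3 {G : SimpleGraph U} (hc : G.Connected) {u w : U}
    (hne : u ≠ w) (hnadj : ¬ G.Adj u w) :
    ∃ a b c, G.Adj a b ∧ G.Adj b c ∧ a ≠ c ∧ ¬ G.Adj a c := by
  obtain ⟨P⟩ := hc.preconnected u w
  revert hne hnadj
  induction P with
  | nil =>
    intro hne _
    exact absurd rfl hne
  | @cons u v w h P ih =>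
    intro hne hnadj
    by_cases hvw : v = w
    · subst hvw
      exact absurd h hnadj
    · by_cases hadj : G.Adj v w
      · exact ⟨u, v, w, h, hadj, hne, hnadj⟩
      · exact ih hvw hadj

private lemma exists_adj [Fintype U] {G : SimpleGraph U} (hc : G.Connected)
    (h2 : 2 ≤ Fintype.card U) : ∃ a b, G.Adj a b := by
  obtain ⟨u, w, hne⟩ := Fintype.exists_pair_of_one_lt_card (α := U) (by omega)
  obtain ⟨P⟩ := hc.preconnected u w
  cases P with
  | nil => exact absurd rfl hne
  | cons h _ => exact ⟨_, _, h⟩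

private lemma complete_case [Fintype U] (Γ : SimpleGraph U) (hwed : WellEdgeDominated Γ)
    {M : Set (Sym2 U)} (hM : IsPerfectMatchingSet Γ M)
    (hcomp : ∀ a b : U, a ≠ b → Γ.Adj a b) (hcard : 5 ≤ Fintype.card U) : False := by
  classical
  obtain ⟨v0, v1, h01⟩ := Fintype.exists_pair_of_one_lt_card (α := U) (by omega)
  set F : Set (Sym2 U) := (fun u => s(v0, u)) '' ({v0, v1}ᶜ) with hF
  have hFmem : ∀ e, e ∈ F ↔ ∃ u, u ≠ v0 ∧ u ≠ v1 ∧ e = s(v0, u) := by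
    intro e
    simp only [hF, Set.mem_image]
    constructor
    · rintro ⟨u, hu, rfl⟩
      refine ⟨u, fun h => hu ?_, fun h => hu ?_, rfl⟩
      · exact Or.inl h
      · exact Or.inr h
    · rintro ⟨u, hu0, hu1, rfl⟩
      refine ⟨u, fun h => ?_, rfl⟩
      rcases h with h | h
      · exact hu0 h
      · exact hu1 h
  have hthird : ∃ u : U, u ≠ v0 ∧ u ≠ v1 := by
    by_contra h
    push_neg at h
    have hsub : (Finset.univ : Finset U) ⊆ {v0, v1} := by
      intro u _
      rcases eq_or_ne u v0 with rfl | hu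
      · exact Finset.mem_insert_self _ _
      · simp [h u hu]
    have h1 := Finset.card_le_card hsub
    have h2' : ({v0, v1} : Finset U).card ≤ 2 := by
      have := Finset.card_insert_le v0 ({v1} : Finset U)
      simpa using this
    rw [Finset.card_univ] at h1
    omega
  -- F is an EDS
  have hFeds : IsEDS Γ F := by
    constructor
    · intro e he
      obtain ⟨u, hu0, hu1, rfl⟩ := (hFmem e).1 he
      exact (Γ.mem_edgeSet).2 (hcomp _ _ (Ne.symm hu0))
    · intro e he heF
      induction e using Sym2.inductionOn with
      | hf a b =>
        have hab : a ≠ b := fun h =>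
          Γ.not_isDiag_of_mem_edgeSet he (Sym2.mk_isDiag_iff.2 h)
        by_cases ha : a ≠ v0 ∧ a ≠ v1
        · exact ⟨s(v0, a), (hFmem _).2 ⟨a, ha.1, ha.2, rfl⟩, a,
            Sym2.mem_mk_left a b, Sym2.mem_mk_right v0 a⟩
        · by_cases hb : b ≠ v0 ∧ b ≠ v1
          · exact ⟨s(v0, b), (hFmem _).2 ⟨b, hb.1, hb.2, rfl⟩, b,
              Sym2.mem_mk_right a b, Sym2.mem_mk_right v0 b⟩
          · push_neg at ha hb
            obtain ⟨u, hu0, hu1⟩ := hthird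
            have hv0 : v0 ∈ s(a, b) := by
              by_cases ha0 : a = v0
              · rw [← ha0]
                exact Sym2.mem_mk_left a b
              · by_cases hb0 : b = v0
                · rw [← hb0]
                  exact Sym2.mem_mk_right a b
                · exact absurd ((ha ha0).trans (hb hb0).symm) hab
            exact ⟨s(v0, u), (hFmem _).2 ⟨u, hu0, hu1, rfl⟩, v0, hv0,
              Sym2.mem_mk_left v0 u⟩
  -- F is a minimal EDS
  have hFminl : IsMinlEDS Γ F := by
    refine ⟨hFeds, ?_⟩
    intro F' hss hEDS'
    obtain ⟨g, hgF, hgF'⟩ := Set.exists_of_ssubset hss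
    obtain ⟨u, hu0, hu1, rfl⟩ := (hFmem g).1 hgF
    have he0 : s(u, v1) ∈ Γ.edgeSet := (Γ.mem_edgeSet).2 (hcomp _ _ hu1)
    have he0F : s(u, v1) ∉ F' := by
      intro h
      obtain ⟨u', hu0', _, heq⟩ := (hFmem _).1 (hss.1 h)
      have : v0 ∈ s(u, v1) := heq ▸ Sym2.mem_mk_left v0 u'
      rcases Sym2.mem_iff.1 this with h' | h'
      · exact hu0 h'.symm
      · exact h01 h'
    obtain ⟨f, hf, v, hv1, hv2⟩ := hEDS'.2 _ he0 he0F
    obtain ⟨u', hu0', hu1', rfl⟩ := (hFmem f).1 (hss.1 hf)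
    rcases Sym2.mem_iff.1 hv1 with rfl | rfl
    · rcases Sym2.mem_iff.1 hv2 with h' | h'
      · exact hu0 h'
      · exact hgF' (h' ▸ hf)
    · rcases Sym2.mem_iff.1 hv2 with h' | h'
      · exact h01 h'.symm
      · exact hu1' h'.symm
  -- cardinality of F
  have hFcard : F.ncard = Fintype.card U - 2 := by
    have hinj : Set.InjOn (fun u => s(v0, u)) ({v0, v1}ᶜ : Set U) := by
      intro a ha b hb h
      rcases Sym2.eq_iff.1 h with ⟨_, h'⟩ | ⟨h', _⟩
      · exact h'
      · exact absurd (Or.inl h'.symm) hb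
    rw [hF, Set.ncard_image_of_injOn hinj]
    have hpair : ({v0, v1} : Set U).ncard = 2 := Set.ncard_pair h01
    have := Set.ncard_add_ncard_compl ({v0, v1} : Set U)
    rw [hpair, Nat.card_eq_fintype_card] at this
    omega
  have hle := hwed F M hFminl (maxl_minlEDS (pm_maxl hM)).1
  have h2M := two_ncard_le hM.1
  omega

private lemma conn_two_adj [Fintype U] {G : SimpleGraph U} (hc : G.Connected)
    (hcard : Fintype.card U = 2) {v w : U} (hne : v ≠ w) : G.Adj v w := by
  classical
  obtain ⟨P⟩ := hc.preconnected v w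
  cases P with
  | nil => exact absurd rfl hne
  | @cons _ u _ h P' =>
    have huv : u ≠ v := h.ne'
    have huw : u = w := by
      by_contra huw
      have h3 : ({u, v, w} : Finset U).card = 3 := by
        rw [Finset.card_insert_of_notMem (by simp [huv, huw]),
          Finset.card_insert_of_notMem (by simp [hne])]
        simp
      have hle := Finset.card_le_univ ({u, v, w} : Finset U)
      rw [h3] at hle
      omega
    exact huw ▸ h

end Helpers2
private lemma strongProd_adj {G : SimpleGraph V} {H : SimpleGraph W} {x y : V × W} :
    (strongProd G H).Adj x y ↔
      x ≠ y ∧ (x.1 = y.1 ∨ G.Adj x.1 y.1) ∧ (x.2 = y.2 ∨ H.Adj x.2 y.2) :=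
  Iff.rfl

theorem stmt17 [Fintype V] [Fintype W] (G : SimpleGraph V) (H : SimpleGraph W)
    (hGn : 2 ≤ Fintype.card V) (hHn : 2 ≤ Fintype.card W)
    (hGc : G.Connected) (hHc : H.Connected)
    (hpm : ∃ M, IsPerfectMatchingSet (strongProd G H) M)
    (hwed : WellEdgeDominated (strongProd G H)) :
    Nonempty (G ≃g (⊤ : SimpleGraph (Fin 2))) ∧
    Nonempty (H ≃g (⊤ : SimpleGraph (Fin 2))) := by
  classical
  obtain ⟨M, hM⟩ := hpm
  have hGcomp : ∀ a b : V, a ≠ b → G.Adj a b := by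
    by_contra hcon
    push_neg at hcon
    obtain ⟨a0, c0, hne0, hnadj0⟩ := hcon
    obtain ⟨a, b, c, hab, hbc, hac, hnac⟩ := exists_inducedP3 hGc hne0 hnadj0
    obtain ⟨d, e, hde⟩ := exists_adj hHc hHn
    refine core_lemma (strongProd G H) hwed hM
      (x1 := (a, d)) (x2 := (a, e)) (y := (b, d)) (z := (c, d)) ?_ ?_ ?_ ?_ ?_ ?_ ?_
    · exact strongProd_adj.2 ⟨by simp [Prod.ext_iff, hde.ne], Or.inl rfl, Or.inr hde⟩
    · exact strongProd_adj.2 ⟨by simp [Prod.ext_iff, hab.ne], Or.inr hab, Or.inl rfl⟩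
    · exact strongProd_adj.2 ⟨by simp [Prod.ext_iff, hbc.ne], Or.inr hbc, Or.inl rfl⟩
    · simp [Prod.ext_iff, hac]
    · simp [Prod.ext_iff, hab.ne]
    · simp [Prod.ext_iff, hac]
    · intro hadj
      rcases (strongProd_adj.1 hadj).2.1 with h | h
      · exact hac h
      · exact hnac h
  have hHcomp : ∀ a b : W, a ≠ b → H.Adj a b := by
    by_contra hcon
    push_neg at hcon
    obtain ⟨a0, c0, hne0, hnadj0⟩ := hcon
    obtain ⟨d, e, f, hde, hef, hdf, hndf⟩ := exists_inducedP3 hHc hne0 hnadj0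
    obtain ⟨a, b, hab⟩ := exists_adj hGc hGn
    refine core_lemma (strongProd G H) hwed hM
      (x1 := (a, d)) (x2 := (b, d)) (y := (a, e)) (z := (a, f)) ?_ ?_ ?_ ?_ ?_ ?_ ?_
    · exact strongProd_adj.2 ⟨by simp [Prod.ext_iff, hab.ne], Or.inr hab, Or.inl rfl⟩
    · exact strongProd_adj.2 ⟨by simp [Prod.ext_iff, hde.ne], Or.inl rfl, Or.inr hde⟩
    · exact strongProd_adj.2 ⟨by simp [Prod.ext_iff, hef.ne], Or.inl rfl, Or.inr hef⟩
    · simp [Prod.ext_iff, hdf]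
    · simp [Prod.ext_iff, hab.ne']
    · simp [Prod.ext_iff, hab.ne']
    · intro hadj
      rcases (strongProd_adj.1 hadj).2.2 with h | h
      · exact hdf h
      · exact hndf h
  have hcompP : ∀ x y : V × W, x ≠ y → (strongProd G H).Adj x y := by
    intro x y hxy
    refine strongProd_adj.2 ⟨hxy, ?_, ?_⟩
    · rcases eq_or_ne x.1 y.1 with h | h
      · exact Or.inl h
      · exact Or.inr (hGcomp _ _ h)
    · rcases eq_or_ne x.2 y.2 with h | h
      · exact Or.inl h
      · exact Or.inr (hHcomp _ _ h)
  have hV2 : Fintype.card V = 2 := by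
    by_contra h
    have h3 : 3 ≤ Fintype.card V := by omega
    have h5 : 5 ≤ Fintype.card (V × W) := by
      rw [Fintype.card_prod]
      nlinarith
    exact complete_case (strongProd G H) hwed hM hcompP h5
  have hW2 : Fintype.card W = 2 := by
    by_contra h
    have h3 : 3 ≤ Fintype.card W := by omega
    have h5 : 5 ≤ Fintype.card (V × W) := by
      rw [Fintype.card_prod]
      nlinarith
    exact complete_case (strongProd G H) hwed hM hcompP h5
  constructor
  · have hGadj : ∀ v w : V, G.Adj v w ↔ v ≠ w :=
      fun v w => ⟨SimpleGraph.Adj.ne, fun h => conn_two_adj hGc hV2 h⟩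
    exact ⟨⟨Fintype.equivFinOfCardEq hV2, by
      intro a b
      simp [SimpleGraph.top_adj, hGadj, ne_eq, EmbeddingLike.apply_eq_iff_eq]⟩⟩
  · have hHadj : ∀ v w : W, H.Adj v w ↔ v ≠ w :=
      fun v w => ⟨SimpleGraph.Adj.ne, fun h => conn_two_adj hHc hW2 h⟩
    exact ⟨⟨Fintype.equivFinOfCardEq hW2, by
      intro a b
      simp [SimpleGraph.top_adj, hHadj, ne_eq, EmbeddingLike.apply_eq_iff_eq]⟩⟩
end

section
/- If G has a near-perfect matching and H has a maximum matching M_H, then G ⊠ H has a maximal matching M with V(G ⊠ H) \ V(M) = (V(G) \ V(M_G)) × (V(H) \ V(M_H)), where M_G is a maximum matching of G; in particular, the complement of V(M) is an independent set of size |V(G)\V(M_G)|·|V(H)\V(M_H)|. -/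
open SimpleGraph

variable {V : Type*} {W : Type*}

/-- In a finite graph, a maximum matching leaves no edge between uncovered vertices. -/
lemma no_edge_uncovered {W : Type*} [Fintype W] {H : SimpleGraph W} {MH : Set (Sym2 W)}
    (hMH : IsMaxMatching H MH) {b b' : W} (hb : b ∉ mVerts MH) (hb' : b' ∉ mVerts MH) :
    ¬ H.Adj b b' := by
  intro hadj
  have hne : s(b, b') ∉ MH := fun h => hb ⟨_, h, Sym2.mem_mk_left _ _⟩
  have hmatch : IsMatchingSet H (insert s(b, b') MH) := by
    refine ⟨?_, ?_⟩
    · intro e he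
      rcases he with rfl | he
      · exact hadj
      · exact hMH.1.1 he
    · rintro e he f hf hef v ⟨hve, hvf⟩
      rcases he with rfl | he
      · rcases hf with rfl | hf
        · exact hef rfl
        · have : v ∈ mVerts MH := ⟨f, hf, hvf⟩
          rcases Sym2.mem_iff.mp hve with rfl | rfl
          · exact hb this
          · exact hb' this
      · rcases hf with rfl | hf
        · have : v ∈ mVerts MH := ⟨e, he, hve⟩
          rcases Sym2.mem_iff.mp hvf with rfl | rfl
          · exact hb this
          · exact hb' this
        · exact hMH.1.2 e he f hf hef v ⟨hve, hvf⟩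
  have := hMH.2 _ hmatch
  rw [Set.ncard_insert_of_notMem hne] at this
  omega

theorem stmt18 [Fintype V] [Fintype W] (G : SimpleGraph V) (H : SimpleGraph W)
    (MG : Set (Sym2 V)) (hMG : IsMaxMatching G MG) (hMGnp : IsNearPerfectMatchingSet G MG)
    (MH : Set (Sym2 W)) (hMH : IsMaxMatching H MH) :
    ∃ M : Set (Sym2 (V × W)), IsMaxlMatching (strongProd G H) M ∧
      (mVerts M)ᶜ = (mVerts MG)ᶜ ×ˢ (mVerts MH)ᶜ ∧
      ((mVerts M)ᶜ.Pairwise fun a b => ¬ (strongProd G H).Adj a b) ∧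
      (mVerts M)ᶜ.ncard = (mVerts MG)ᶜ.ncard * (mVerts MH)ᶜ.ncard := by
  classical
  obtain ⟨w, hw⟩ := hMGnp.2
  have hwc : (mVerts MG)ᶜ = {w} := by rw [hw, compl_compl]
  set sp := strongProd G H with hsp
  -- the matching
  set M : Set (Sym2 (V × W)) :=
    {e | ∃ u b b', e = s((u, b), (u, b')) ∧ s(b, b') ∈ MH} ∪
    {e | ∃ u u' b, e = s((u, b), (u', b)) ∧ s(u, u') ∈ MG ∧ b ∉ mVerts MH} with hMdef
  -- covered vertices of M
  have hverts : ∀ x : V × W, x ∈ mVerts M ↔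
      (x.2 ∈ mVerts MH ∨ (x.2 ∉ mVerts MH ∧ x.1 ∈ mVerts MG)) := by
    intro x
    constructor
    · rintro ⟨e, he, hxe⟩
      rcases he with ⟨u, b, b', rfl, hbb⟩ | ⟨u, u', b, rfl, huu, hbm⟩
      · left
        rcases Sym2.mem_iff.mp hxe with rfl | rfl
        · exact ⟨_, hbb, Sym2.mem_mk_left _ _⟩
        · exact ⟨_, hbb, Sym2.mem_mk_right _ _⟩
      · right
        rcases Sym2.mem_iff.mp hxe with rfl | rfl
        · exact ⟨hbm, _, huu, Sym2.mem_mk_left _ _⟩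
        · exact ⟨hbm, _, huu, Sym2.mem_mk_right _ _⟩
    · rintro (⟨f, hf, hxf⟩ | ⟨hxm, f, hf, hxf⟩)
      · induction f with
        | _ b b' =>
          rcases Sym2.mem_iff.mp hxf with h2 | h2
          · exact ⟨s((x.1, b), (x.1, b')), Or.inl ⟨x.1, b, b', rfl, hf⟩,
              by rw [Sym2.mem_iff]; left; exact Prod.ext rfl h2⟩
          · exact ⟨s((x.1, b), (x.1, b')), Or.inl ⟨x.1, b, b', rfl, hf⟩,
              by rw [Sym2.mem_iff]; right; exact Prod.ext rfl h2⟩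
      · induction f with
        | _ u u' =>
          rcases Sym2.mem_iff.mp hxf with h1 | h1
          · exact ⟨s((u, x.2), (u', x.2)), Or.inr ⟨u, u', x.2, rfl, hf, hxm⟩,
              by rw [Sym2.mem_iff]; left; exact Prod.ext h1 rfl⟩
          · exact ⟨s((u, x.2), (u', x.2)), Or.inr ⟨u, u', x.2, rfl, hf, hxm⟩,
              by rw [Sym2.mem_iff]; right; exact Prod.ext h1 rfl⟩
  have hcompl : (mVerts M)ᶜ = (mVerts MG)ᶜ ×ˢ (mVerts MH)ᶜ := by
    ext x
    simp only [Set.mem_compl_iff, Set.mem_prod, hverts]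
    tauto
  -- M is a matching
  have hMmatch : IsMatchingSet sp M := by
    constructor
    · rintro e (⟨u, b, b', rfl, hbb⟩ | ⟨u, u', b, rfl, huu, hbm⟩)
      · have hadj : H.Adj b b' := hMH.1.1 hbb
        rw [hsp]; exact ⟨by simp [Prod.ext_iff, hadj.ne], Or.inl rfl, Or.inr hadj⟩
      · have hadj : G.Adj u u' := hMG.1.1 huu
        rw [hsp]; exact ⟨by simp [Prod.ext_iff, hadj.ne], Or.inr hadj, Or.inl rfl⟩
    · rintro e he f hf hef v ⟨hve, hvf⟩
      rcases he with ⟨u, b, b', rfl, hbb⟩ | ⟨u, u', b, rfl, huu, hbm⟩ <;>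
        rcases hf with ⟨u2, c, c', rfl, hcc⟩ | ⟨u2, u2', c, rfl, hcc, hcm⟩
      · -- both horizontal
        by_cases hff : s(b, b') = s(c, c')
        · apply hef
          have hu : u = u2 := by
            rcases Sym2.mem_iff.mp hve with rfl | rfl <;>
              rcases Sym2.mem_iff.mp hvf with h | h <;>
                simp_all [Prod.ext_iff]
          subst hu
          rcases Sym2.eq_iff.mp hff with ⟨rfl, rfl⟩ | ⟨rfl, rfl⟩
          · rfl
          · exact Sym2.eq_swap
        · apply hMH.1.2 _ hbb _ hcc hff v.2
          constructor
          · rcases Sym2.mem_iff.mp hve with rfl | rfl <;> simp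
          · rcases Sym2.mem_iff.mp hvf with rfl | rfl <;> simp
      · -- horizontal / vertical
        have h1 : v.2 ∈ mVerts MH := by
          rcases Sym2.mem_iff.mp hve with rfl | rfl
          · exact ⟨_, hbb, Sym2.mem_mk_left _ _⟩
          · exact ⟨_, hbb, Sym2.mem_mk_right _ _⟩
        have h2 : v.2 = c := by
          rcases Sym2.mem_iff.mp hvf with rfl | rfl <;> rfl
        exact hcm (h2 ▸ h1)
      · have h1 : v.2 ∈ mVerts MH := by
          rcases Sym2.mem_iff.mp hvf with rfl | rfl
          · exact ⟨_, hcc, Sym2.mem_mk_left _ _⟩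
          · exact ⟨_, hcc, Sym2.mem_mk_right _ _⟩
        have h2 : v.2 = b := by
          rcases Sym2.mem_iff.mp hve with rfl | rfl <;> rfl
        exact hbm (h2 ▸ h1)
      · -- both vertical
        by_cases hff : s(u, u') = s(u2, u2')
        · apply hef
          have hb2 : b = c := by
            rcases Sym2.mem_iff.mp hve with rfl | rfl <;>
              rcases Sym2.mem_iff.mp hvf with h | h <;>
                simp_all [Prod.ext_iff]
          subst hb2
          rcases Sym2.eq_iff.mp hff with ⟨rfl, rfl⟩ | ⟨rfl, rfl⟩
          · rfl
          · exact Sym2.eq_swap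
        · apply hMG.1.2 _ huu _ hcc hff v.1
          constructor
          · rcases Sym2.mem_iff.mp hve with rfl | rfl <;> simp
          · rcases Sym2.mem_iff.mp hvf with rfl | rfl <;> simp
  -- maximality
  have hmaxl : IsMaxlMatching sp M := by
    refine ⟨hMmatch, fun M' hsub hM' => ?_⟩
    refine Set.Subset.antisymm (fun e he => ?_) hsub
    by_contra heM
    have hunc : ∀ x ∈ e, x ∉ mVerts M := by
      rintro x hx ⟨f, hfM, hxf⟩
      exact hM'.2 e he f (hsub hfM) (fun h => heM (h ▸ hfM)) x ⟨hx, hxf⟩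
    have hee : e ∈ sp.edgeSet := hM'.1 he
    induction e with
    | _ x y =>
      have hadj : sp.Adj x y := hee
      have hx := hunc x (Sym2.mem_mk_left _ _)
      have hy := hunc y (Sym2.mem_mk_right _ _)
      rw [← Set.mem_compl_iff, hcompl, Set.mem_prod] at hx hy
      have hx1 : x.1 = w := by have := hx.1; rw [hwc] at this; exact this
      have hy1 : y.1 = w := by have := hy.1; rw [hwc] at this; exact this
      rw [hsp] at hadj; obtain ⟨hne, h1, h2⟩ := hadj
      have hne2 : x.2 ≠ y.2 := fun h => hne (Prod.ext (hx1.trans hy1.symm) h)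
      rcases h2 with h2 | h2
      · exact hne2 h2
      · exact no_edge_uncovered hMH hx.2 hy.2 h2
  -- independence
  have hindep : (mVerts M)ᶜ.Pairwise fun a b => ¬ sp.Adj a b := by
    intro a ha b hb hab hadj
    rw [hcompl, Set.mem_prod, hwc] at ha hb
    rw [hsp] at hadj; obtain ⟨hne, h1, h2⟩ := hadj
    have : a.2 ≠ b.2 := fun h => hab (Prod.ext (ha.1.trans hb.1.symm) h)
    rcases h2 with h2 | h2
    · exact this h2
    · exact no_edge_uncovered hMH ha.2 hb.2 h2
  refine ⟨M, hmaxl, hcompl, hindep, ?_⟩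
  rw [hcompl, hwc, Set.singleton_prod, Set.ncard_image_of_injective _ (fun b b' h => congrArg Prod.snd h),
    Set.ncard_singleton, one_mul]
end

section
/- The strong product C_4 ⊠ C_4 is not well-dominated: its domination number is 3 while it has a minimal dominating set of size 4 (a maximum independent set). -/
open SimpleGraph

variable {V : Type*} {W : Type*}

section Aux

local notation "G44" => strongProd (cycleGraph 4) (cycleGraph 4)

instance : DecidableRel (strongProd (cycleGraph 4) (cycleGraph 4)).Adj :=
  fun x y => inferInstanceAs (Decidable (x ≠ y ∧ (x.1 = y.1 ∨ (cycleGraph 4).Adj x.1 y.1) ∧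
    (x.2 = y.2 ∨ (cycleGraph 4).Adj x.2 y.2)))

private lemma key3 : ∀ v : Fin 4 × Fin 4,
    (v = (0,0) ∨ v = (1,1) ∨ v = (2,2)) ∨
    (G44).Adj (0,0) v ∨ (G44).Adj (1,1) v ∨ (G44).Adj (2,2) v := by decide

private lemma key2 : ∀ u w : Fin 4 × Fin 4, ∃ v : Fin 4 × Fin 4,
    v ≠ u ∧ v ≠ w ∧ ¬ (G44).Adj u v ∧ ¬ (G44).Adj w v := by decide

private lemma key4 : ∀ v : Fin 4 × Fin 4,
    (v = (0,0) ∨ v = (0,2) ∨ v = (2,0) ∨ v = (2,2)) ∨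
    (G44).Adj (0,0) v ∨ (G44).Adj (0,2) v ∨ (G44).Adj (2,0) v ∨ (G44).Adj (2,2) v := by
  decide

private lemma key4indep : ∀ u v : Fin 4 × Fin 4,
    (u = (0,0) ∨ u = (0,2) ∨ u = (2,0) ∨ u = (2,2)) →
    (v = (0,0) ∨ v = (0,2) ∨ v = (2,0) ∨ v = (2,2)) →
    ¬ (G44).Adj u v := by decide

private lemma dom3 : IsDomSet (G44)
    ({(0,0), (1,1), (2,2)} : Set (Fin 4 × Fin 4)) := by
  intro v hv
  rcases key3 v with (h | h | h) | h | h | h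
  · exact absurd (by simp [h]) hv
  · exact absurd (by simp [h]) hv
  · exact absurd (by simp [h]) hv
  · exact ⟨(0,0), by simp, h⟩
  · exact ⟨(1,1), by simp, h⟩
  · exact ⟨(2,2), by simp, h⟩

private lemma lb3 : ∀ D : Set (Fin 4 × Fin 4), IsDomSet (G44) D → 3 ≤ D.ncard := by
  intro D hD
  by_contra h
  push_neg at h
  rcases D.eq_empty_or_nonempty with rfl | hne
  · obtain ⟨u, hu, -⟩ := hD (0,0) (by simp)
    exact hu
  · have hfin : D.Finite := D.toFinite
    have h1 : 0 < D.ncard := (Set.ncard_pos D.toFinite).mpr hne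
    interval_cases hc : D.ncard
    · obtain ⟨a, rfl⟩ := Set.ncard_eq_one.mp hc
      obtain ⟨v, hva, -, hna, -⟩ := key2 a a
      obtain ⟨u, hu, hadj⟩ := hD v (by simpa using hva)
      rw [Set.mem_singleton_iff] at hu
      exact hna (hu ▸ hadj)
    · obtain ⟨a, b, -, rfl⟩ := Set.ncard_eq_two.mp hc
      obtain ⟨v, hva, hvb, hna, hnb⟩ := key2 a b
      obtain ⟨u, hu, hadj⟩ := hD v (by simp [hva, hvb])
      rcases hu with rfl | hu
      · exact hna hadj
      · rw [Set.mem_singleton_iff] at hu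
        exact hnb (hu ▸ hadj)

private lemma card3 : ({(0,0), (1,1), (2,2)} : Set (Fin 4 × Fin 4)).ncard = 3 := by
  rw [Set.ncard_insert_of_notMem (by simp [Prod.ext_iff]), Set.ncard_insert_of_notMem (by simp [Prod.ext_iff]),
    Set.ncard_singleton]

private lemma card4 :
    ({(0,0), (0,2), (2,0), (2,2)} : Set (Fin 4 × Fin 4)).ncard = 4 := by
  rw [Set.ncard_insert_of_notMem (by simp [Prod.ext_iff]), Set.ncard_insert_of_notMem (by simp [Prod.ext_iff]),
    Set.ncard_insert_of_notMem (by simp [Prod.ext_iff]), Set.ncard_singleton]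

private lemma dom4 : IsDomSet (G44)
    ({(0,0), (0,2), (2,0), (2,2)} : Set (Fin 4 × Fin 4)) := by
  intro v hv
  rcases key4 v with (h | h | h | h) | h | h | h | h
  · exact absurd (by simp [h]) hv
  · exact absurd (by simp [h]) hv
  · exact absurd (by simp [h]) hv
  · exact absurd (by simp [h]) hv
  · exact ⟨(0,0), by simp, h⟩
  · exact ⟨(0,2), by simp, h⟩
  · exact ⟨(2,0), by simp, h⟩
  · exact ⟨(2,2), by simp, h⟩

private lemma minl4 : IsMinlDomSet (G44)
    ({(0,0), (0,2), (2,0), (2,2)} : Set (Fin 4 × Fin 4)) := by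
  refine ⟨dom4, ?_⟩
  intro D' hss hdom'
  obtain ⟨x, hxD, hxD'⟩ := Set.exists_of_ssubset hss
  obtain ⟨u, hu, hadj⟩ := hdom' x hxD'
  have huD := hss.subset hu
  have hx4 : x = ((0:Fin 4),(0:Fin 4)) ∨ x = (0,2) ∨ x = (2,0) ∨ x = (2,2) := by
    simpa [Set.mem_insert_iff] using hxD
  have hu4 : u = ((0:Fin 4),(0:Fin 4)) ∨ u = (0,2) ∨ u = (2,0) ∨ u = (2,2) := by
    simpa [Set.mem_insert_iff] using huD
  exact key4indep u x hu4 hx4 hadj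

end Aux

theorem stmt19 :
    domNum (strongProd (cycleGraph 4) (cycleGraph 4)) = 3 ∧
    (∃ D : Set (Fin 4 × Fin 4),
      IsMinlDomSet (strongProd (cycleGraph 4) (cycleGraph 4)) D ∧ D.ncard = 4) ∧
    ¬ WellDominated (strongProd (cycleGraph 4) (cycleGraph 4)) := by
  have h3 : (3 : ℕ) ∈ {n | ∃ D : Set (Fin 4 × Fin 4),
      IsDomSet (strongProd (cycleGraph 4) (cycleGraph 4)) D ∧ D.ncard = n} :=
    ⟨_, dom3, card3⟩
  have hdn : domNum (strongProd (cycleGraph 4) (cycleGraph 4)) = 3 := by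
    refine le_antisymm (Nat.sInf_le h3) (le_csInf ⟨3, h3⟩ ?_)
    rintro n ⟨D, hD, rfl⟩
    exact lb3 D hD
  refine ⟨hdn, ⟨_, minl4, card4⟩, ?_⟩
  intro hwd
  have := hwd _ _ minl4 dom3
  rw [card4, card3] at this
  omega
end
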